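/- arXiv:1908.01041 — 6 statements merged into one kernel-verified Lean document; each statement's English description precedes it below -/
import Mathlib

section
/- Let p₁, q₁, q₂, q₃ be real numbers with q₁ + q₂ + q₃ = 0, and let Q₀ be the 3×3 matrix with rows (q₁, 0, 0), (0, q₂, p₁), (0, −p₁, q₃). Define A_{Q₀} ⊆ M₃(ℝ) as the ℝ-linear span of the matrices [x] + [y]Q₀ for x, y ∈ ℝ³. Set D = p₁² + 2q₂² + 5q₂q₃ + 2q₃². Then dim A_{Q₀} < 6 if and only if p₁·D = 0 and (q₂ − q₃)·D = 0, i.e., if and only if either D = 0 or (p₁ = 0 and q₂ = q₃). -/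
open Matrix

noncomputable section

/-- Partial derivative in the `j`-th coordinate direction. -/
def pd {m : ℕ} {F : Type*} [NormedAddCommGroup F] [NormedSpace ℝ F]
    (j : Fin m) (f : (Fin m → ℝ) → F) (u : Fin m → ℝ) : F :=
  fderiv ℝ f u (Pi.single j 1)

/-- The special orthogonal group SO(3), as a set of 3×3 real matrices. -/
def SO3 : Set (Matrix (Fin 3) (Fin 3) ℝ) :=
  {A | Aᵀ * A = 1 ∧ A.det = 1}

/-- The skew-symmetric matrix `[v]` associated to `v ∈ ℝ³`, with `[v] w = w × v`. -/
def crossMat (v : Fin 3 → ℝ) : Matrix (Fin 3) (Fin 3) ℝ :=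
  !![0, v 2, -(v 1); -(v 2), 0, v 0; v 1, -(v 0), 0]

/-- The Jacobian matrix of a map `x : ℝ³ → ℝ³`. -/
def jacobian (x : (Fin 3 → ℝ) → (Fin 3 → ℝ)) (u : Fin 3 → ℝ) :
    Matrix (Fin 3) (Fin 3) ℝ :=
  Matrix.of fun i j => pd j x u i

/-- `W(u) = a(u)⁻¹ · Dx(u)`, the coefficient matrix of the coframing `ω = a⁻¹ dx`. -/
def Wmat (a : (Fin 3 → ℝ) → Matrix (Fin 3) (Fin 3) ℝ)
    (x : (Fin 3 → ℝ) → (Fin 3 → ℝ)) (u : Fin 3 → ℝ) : Matrix (Fin 3) (Fin 3) ℝ :=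
  (a u)⁻¹ * jacobian x u

/-- The tableau `A_Q`: the span of the matrices `[x] + [y] Q`. -/
def tableau (Q : Matrix (Fin 3) (Fin 3) ℝ) : Submodule ℝ (Matrix (Fin 3) (Fin 3) ℝ) :=
  Submodule.span ℝ {M | ∃ x y : Fin 3 → ℝ, M = crossMat x + crossMat y * Q}

end

lemma crossMat_add (x y : Fin 3 → ℝ) : crossMat (x + y) = crossMat x + crossMat y := by
  ext i j; fin_cases i <;> fin_cases j <;> simp [crossMat] <;> ring

lemma crossMat_smul (c : ℝ) (x : Fin 3 → ℝ) : crossMat (c • x) = c • crossMat x := by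
  ext i j; fin_cases i <;> fin_cases j <;> simp [crossMat]

def tabMap (Q : Matrix (Fin 3) (Fin 3) ℝ) :
    ((Fin 3 → ℝ) × (Fin 3 → ℝ)) →ₗ[ℝ] Matrix (Fin 3) (Fin 3) ℝ where
  toFun v := crossMat v.1 + crossMat v.2 * Q
  map_add' u v := by simp [crossMat_add, add_mul]; abel
  map_smul' c v := by simp [crossMat_smul, smul_add, smul_mul_assoc]

lemma tableau_eq_range (Q : Matrix (Fin 3) (Fin 3) ℝ) :
    tableau Q = LinearMap.range (tabMap Q) := by
  rw [tableau]
  have h : {M | ∃ x y : Fin 3 → ℝ, M = crossMat x + crossMat y * Q}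
      = Set.range (tabMap Q) := by
    ext M; constructor
    · rintro ⟨x, y, rfl⟩; exact ⟨(x, y), rfl⟩
    · rintro ⟨⟨x, y⟩, rfl⟩; exact ⟨x, y, rfl⟩
  rw [h, ← LinearMap.coe_range, Submodule.span_eq]

lemma dim_lt_iff (Q : Matrix (Fin 3) (Fin 3) ℝ) :
    Module.finrank ℝ (tableau Q) < 6 ↔ ∃ v : (Fin 3 → ℝ) × (Fin 3 → ℝ),
      v ≠ 0 ∧ crossMat v.1 + crossMat v.2 * Q = 0 := by
  rw [tableau_eq_range]
  have hrn := LinearMap.finrank_range_add_finrank_ker (tabMap Q)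
  have hdom : Module.finrank ℝ ((Fin 3 → ℝ) × (Fin 3 → ℝ)) = 6 := by simp
  rw [hdom] at hrn
  constructor
  · intro h
    have hker : LinearMap.ker (tabMap Q) ≠ ⊥ := by
      intro hk
      rw [hk] at hrn
      simp at hrn
      omega
    obtain ⟨v, hv, hv0⟩ := Submodule.exists_mem_ne_zero_of_ne_bot hker
    exact ⟨v, hv0, hv⟩
  · rintro ⟨v, hv0, hv⟩
    have hker : 0 < Module.finrank ℝ (LinearMap.ker (tabMap Q)) := by
      rw [Module.finrank_pos_iff_exists_ne_zero (R := ℝ)]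
      refine ⟨⟨v, hv⟩, fun h => hv0 ?_⟩
      exact congrArg Subtype.val h
    omega

set_option maxHeartbeats 1000000 in
/-- dimension criterion for the tableau of the normalized matrix `Q₀`
(from the proof of Proposition 2.3 of the paper). -/
theorem tableau_dim_lt_six_iff (p₁ q₁ q₂ q₃ : ℝ) (htr : q₁ + q₂ + q₃ = 0) :
    Module.finrank ℝ
        (tableau !![q₁, 0, 0; 0, q₂, p₁; 0, -p₁, q₃]) < 6 ↔
      (p₁ * (p₁ ^ 2 + 2 * q₂ ^ 2 + 5 * q₂ * q₃ + 2 * q₃ ^ 2) = 0 ∧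
       (q₂ - q₃) * (p₁ ^ 2 + 2 * q₂ ^ 2 + 5 * q₂ * q₃ + 2 * q₃ ^ 2) = 0) := by
  obtain rfl : q₁ = -q₂ - q₃ := by linarith
  rw [dim_lt_iff]
  constructor
  · rintro ⟨⟨x, y⟩, hv0, hv⟩
    by_cases hD : p₁ ^ 2 + 2 * q₂ ^ 2 + 5 * q₂ * q₃ + 2 * q₃ ^ 2 = 0
    · exact ⟨by rw [hD]; ring, by rw [hD]; ring⟩
    have e : ∀ i j, (crossMat x + crossMat y * !![-q₂-q₃, 0, 0; 0, q₂, p₁; 0, -p₁, q₃]) i j = 0 :=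
      fun i j => by rw [hv]; rfl
    have A12 := e 0 1
    have A13 := e 0 2
    have A21 := e 1 0
    have A23 := e 1 2
    have A31 := e 2 0
    have A32 := e 2 1
    have A22 := e 1 1
    simp [crossMat, Matrix.mul_apply, Fin.sum_univ_three] at A12 A13 A21 A23 A31 A32 A22
    have hy2 : y 2 = 0 := by
      have h : (p₁ ^ 2 + 2 * q₂ ^ 2 + 5 * q₂ * q₃ + 2 * q₃ ^ 2) * y 2 = 0 := by
        linear_combination p₁ * A13 + p₁ * A31 + (q₂ + 2*q₃) * A12 + (q₂ + 2*q₃) * A21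
      exact (mul_eq_zero.mp h).resolve_left hD
    have hy1 : y 1 = 0 := by
      have h : (p₁ ^ 2 + 2 * q₂ ^ 2 + 5 * q₂ * q₃ + 2 * q₃ ^ 2) * y 1 = 0 := by
        linear_combination p₁ * A12 + p₁ * A21 - (2*q₂ + q₃) * A13 - (2*q₂ + q₃) * A31
      exact (mul_eq_zero.mp h).resolve_left hD
    have hx1 : x 1 = 0 := by linear_combination A31 + (q₂ + q₃) * hy1
    have hx2 : x 2 = 0 := by linear_combination -A21 + (q₂ + q₃) * hy2
    have hy0 : y 0 ≠ 0 := by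
      intro hy0
      apply hv0
      have hx0 : x 0 = 0 := by linear_combination A23 - q₃ * hy0
      have hx : x = 0 := by funext i; fin_cases i <;> assumption
      have hy : y = 0 := by funext i; fin_cases i <;> assumption
      simp [hx, hy, Prod.ext_iff]
    have hp : p₁ = 0 := A22.resolve_left hy0
    have hq : q₂ = q₃ := by
      have h : (q₂ - q₃) * y 0 = 0 := by linear_combination -A23 - A32
      have := (mul_eq_zero.mp h).resolve_right hy0
      linarith
    constructor <;> rw [hp, hq] <;> ring
  · rintro ⟨h1, h2⟩
    by_cases hp : p₁ = 0 ∧ q₂ = q₃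
    · obtain ⟨hp1, hq⟩ := hp
      refine ⟨(![-q₃, 0, 0], ![1, 0, 0]), ?_, ?_⟩
      · intro h
        have := congrFun (congrArg Prod.snd h) 0
        simp at this
      · ext i j
        fin_cases i <;> fin_cases j <;>
          simp [crossMat, Matrix.mul_apply, Fin.sum_univ_three, Matrix.vecHead, Matrix.vecTail, hp1, hq] <;> ring
    · have hD : p₁ ^ 2 + 2 * q₂ ^ 2 + 5 * q₂ * q₃ + 2 * q₃ ^ 2 = 0 := by
        by_contra hD
        exact hp ⟨by
          have := mul_eq_zero.mp h1; tauto, by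
          have := (mul_eq_zero.mp h2).resolve_right hD; linarith⟩
      by_cases hz : p₁ = 0 ∧ q₂ = -q₂ - q₃
      · obtain ⟨hp1, hq⟩ := hz
        subst hp1
        obtain rfl : q₃ = -2*q₂ := by linarith
        have hq2 : q₂ ≠ 0 := by
          intro h
          exact hp ⟨rfl, by rw [h]; ring⟩
        refine ⟨(![0, 0, -3*q₂^2], ![0, 0, 3*q₂]), ?_, ?_⟩
        · intro h
          have := congrFun (congrArg Prod.snd h) 2
          simp at this
          exact hq2 this
        · ext i j
          fin_cases i <;> fin_cases j <;>
            simp [crossMat, Matrix.mul_apply, Fin.sum_univ_three, Matrix.vecHead, Matrix.vecTail] <;>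
            ring
      · have hne : ¬(q₂ - (-q₂ - q₃) = 0 ∧ p₁ = 0) := by
          intro ⟨ha, hb⟩
          exact hz ⟨hb, by linarith⟩
        refine ⟨(![0, -(-q₂-q₃) * (q₂ - (-q₂-q₃)), -(-q₂-q₃) * (-p₁)],
                 ![0, q₂ - (-q₂-q₃), -p₁]), ?_, ?_⟩
        · intro h
          have h1' := congrFun (congrArg Prod.snd h) 1
          have h2' := congrFun (congrArg Prod.snd h) 2
          simp at h1' h2'
          exact hne ⟨h1', h2'⟩
        · ext i j
          fin_cases i <;> fin_cases j <;>
            simp [crossMat, Matrix.mul_apply, Fin.sum_univ_three, Matrix.vecHead, Matrix.vecTail] <;>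
            first
            | ring1
            | linear_combination hD
            | linear_combination -hD
            | linear_combination 2 * hD
            | linear_combination (-2) * hD
end

section
/- Let P be an invertible real 3×3 matrix and let Z, Q be real 3×3 matrices. Then the equation ((tr Q) I₃ − Qᵀ) + (det P)⁻¹ · Z · Pᵀ = 0 holds if and only if Q = (det P)⁻¹ · (P Zᵀ − (1/2) tr(P Zᵀ) I₃). (This matrix identity characterizes the admissible integral elements of the exterior differential system: the 3-plane defined by ξ = Pη, α = QPη is an integral element if and only if Q is given by this formula, so the admissible integral elements over each point are parametrized by P ∈ GL(3,ℝ).) -/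
open Matrix

/-- characterization of admissible integral elements
(the computational heart of Proposition 2.2 of the paper). -/
theorem integral_element_Q_formula (P Z Q : Matrix (Fin 3) (Fin 3) ℝ)
    (hP : IsUnit P.det) :
    (Q.trace • (1 : Matrix (Fin 3) (Fin 3) ℝ) - Qᵀ) + (P.det)⁻¹ • (Z * Pᵀ) = 0 ↔
      Q = (P.det)⁻¹ • (P * Zᵀ - ((1 / 2) * (P * Zᵀ).trace) • 1) := by
  have hMT : (Z * Pᵀ)ᵀ = P * Zᵀ := by
    rw [Matrix.transpose_mul, Matrix.transpose_transpose]
  have htrM : (P * Zᵀ).trace = (Z * Pᵀ).trace := by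
    rw [← hMT, Matrix.trace_transpose]
  constructor
  · intro h
    have hQT : Qᵀ = Q.trace • (1 : Matrix (Fin 3) (Fin 3) ℝ) + P.det⁻¹ • (Z * Pᵀ) := by
      rw [sub_add_eq_add_sub, sub_eq_zero] at h
      exact h.symm
    have htr := congrArg Matrix.trace hQT
    simp [Matrix.trace_add, Matrix.trace_smul, Matrix.trace_one, Matrix.trace_transpose,
      smul_eq_mul] at htr
    have htr' : Q.trace = -(1 / 2) * (P.det⁻¹ * (Z * Pᵀ).trace) := by
      linarith
    have hQ := congrArg Matrix.transpose hQT
    rw [Matrix.transpose_transpose, Matrix.transpose_add, Matrix.transpose_smul,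
      Matrix.transpose_smul, Matrix.transpose_one, hMT] at hQ
    rw [hQ, htr', htrM]
    module
  · intro h
    have htrQ : Q.trace = -(1 / 2) * (P.det⁻¹ * (Z * Pᵀ).trace) := by
      rw [h]
      simp [Matrix.trace_smul, Matrix.trace_sub, Matrix.trace_one, smul_eq_mul, htrM]
      ring
    have hQT : Qᵀ = P.det⁻¹ • (Z * Pᵀ - ((1 / 2) * (Z * Pᵀ).trace) • 1) := by
      rw [h, Matrix.transpose_smul, Matrix.transpose_sub, Matrix.transpose_smul,
        Matrix.transpose_one, ← hMT, Matrix.transpose_transpose, Matrix.trace_transpose]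
    rw [hQT, htrQ]
    module
end

section
/- Let U ⊆ ℝ³ be open, let x : U → ℝ³ be a smooth map whose Jacobian matrix Dx(u) is invertible for every u ∈ U, and let a : U → SO(3) be smooth. Define W : U → M₃(ℝ) by W(u) = a(u)⁻¹ · Dx(u), so that ωⁱ = Σ_j W_{ij} du^j (i = 1,2,3) is a coframing on U with flat associated metric. If dω² = dω³ = 0, i.e., ∂_j W_{ik} = ∂_k W_{ij} on U for i ∈ {2,3} and all j, k, then ω¹ ∧ dω¹ = 0, i.e., W_{11}·(∂₂W_{13} − ∂₃W_{12}) + W_{12}·(∂₃W_{11} − ∂₁W_{13}) + W_{13}·(∂₁W_{12} − ∂₂W_{11}) = 0 identically on U. -/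
open Matrix

noncomputable section AuxOmega
def Bmat (a : (Fin 3 → ℝ) → Matrix (Fin 3) (Fin 3) ℝ) (l : Fin 3) (v : Fin 3 → ℝ) :
    Matrix (Fin 3) (Fin 3) ℝ := Matrix.of fun m i => pd l (fun w => a w m i) v

def Th (a : (Fin 3 → ℝ) → Matrix (Fin 3) (Fin 3) ℝ) (l : Fin 3) (v : Fin 3 → ℝ) :
    Matrix (Fin 3) (Fin 3) ℝ := (a v)ᵀ * Bmat a l v


variable {U : Set (Fin 3 → ℝ)} {x : (Fin 3 → ℝ) → (Fin 3 → ℝ)}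
  {a : (Fin 3 → ℝ) → Matrix (Fin 3) (Fin 3) ℝ}

theorem pd_congr {f g : (Fin 3 → ℝ) → ℝ} (hU : IsOpen U) (h : ∀ v ∈ U, f v = g v)
    {u : Fin 3 → ℝ} (hu : u ∈ U) (j : Fin 3) : pd j f u = pd j g u := by
  unfold pd
  rw [Filter.EventuallyEq.fderiv_eq]
  filter_upwards [hU.mem_nhds hu] with v hv using h v hv

theorem pd_const {c : ℝ} (j : Fin 3) (u : Fin 3 → ℝ) : pd j (fun _ => c) u = 0 := by
  simp [pd]

theorem pd_contDiffOn {f : (Fin 3 → ℝ) → ℝ} (hU : IsOpen U)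
    (hf : ContDiffOn ℝ (⊤:ℕ∞) f U) (j : Fin 3) : ContDiffOn ℝ (⊤:ℕ∞) (pd j f) U := by
  have h1 : ContDiffOn ℝ (⊤:ℕ∞) (fderiv ℝ f) U := hf.fderiv_of_isOpen hU (by simp)
  exact h1.clm_apply contDiffOn_const

theorem diffAt_of_cdOn {f : (Fin 3 → ℝ) → ℝ} (hU : IsOpen U)
    (hf : ContDiffOn ℝ (⊤:ℕ∞) f U) {u : Fin 3 → ℝ} (hu : u ∈ U) :
    DifferentiableAt ℝ f u :=
  (hf.contDiffAt (hU.mem_nhds hu)).differentiableAt (by simp)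

theorem pd_mul {f g : (Fin 3 → ℝ) → ℝ} {u : Fin 3 → ℝ} (hf : DifferentiableAt ℝ f u)
    (hg : DifferentiableAt ℝ g u) (j : Fin 3) :
    pd j (fun v => f v * g v) u = pd j f u * g u + f u * pd j g u := by
  unfold pd
  rw [fderiv_fun_mul hf hg]
  simp only [ContinuousLinearMap.add_apply, ContinuousLinearMap.smul_apply, smul_eq_mul]
  ring

theorem pd_sum {f : Fin 3 → (Fin 3 → ℝ) → ℝ} {u : Fin 3 → ℝ}
    (hf : ∀ i, DifferentiableAt ℝ (f i) u) (j : Fin 3) :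
    pd j (fun v => ∑ i, f i v) u = ∑ i, pd j (f i) u := by
  unfold pd
  rw [fderiv_fun_sum fun i _ => hf i]
  simp

theorem pd_comm {f : (Fin 3 → ℝ) → ℝ} (hU : IsOpen U)
    (hf : ContDiffOn ℝ (⊤:ℕ∞) f U) {u : Fin 3 → ℝ} (hu : u ∈ U) (j k : Fin 3) :
    pd j (pd k f) u = pd k (pd j f) u := by
  have hca : ContDiffAt ℝ (⊤:ℕ∞) f u := hf.contDiffAt (hU.mem_nhds hu)
  have hsymm : IsSymmSndFDerivAt ℝ f u := by
    apply hca.isSymmSndFDerivAt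
    rw [show ((2:WithTop ℕ∞)) = ((2:ℕ∞):WithTop ℕ∞) by rfl]
    exact (minSmoothness_of_isRCLikeNormedField (𝕜 := ℝ)) ▸ WithTop.coe_le_coe.mpr (le_top : (2:ℕ∞) ≤ ⊤)
  have hd : DifferentiableAt ℝ (fderiv ℝ f) u := by
    have h1 : ContDiffOn ℝ (⊤:ℕ∞) (fderiv ℝ f) U := hf.fderiv_of_isOpen hU (by simp)
    exact (h1.contDiffAt (hU.mem_nhds hu)).differentiableAt (by simp)
  have ev : ∀ w c, fderiv ℝ (fun v => fderiv ℝ f v c) u w = fderiv ℝ (fderiv ℝ f) u w c := by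
    intro w c
    rw [fderiv_clm_apply hd (differentiableAt_const c)]
    simp
  unfold pd
  rw [ev, ev, hsymm]

theorem xf_cd (hx : ContDiffOn ℝ (⊤:ℕ∞) x U) (i : Fin 3) :
    ContDiffOn ℝ (⊤:ℕ∞) (fun v => x v i) U :=
  (ContinuousLinearMap.proj (R := ℝ) (φ := fun _ : Fin 3 => ℝ) i).contDiff.comp_contDiffOn hx

theorem jac_entry (hU : IsOpen U) (hx : ContDiffOn ℝ (⊤:ℕ∞) x U)
    {v : Fin 3 → ℝ} (hv : v ∈ U) (i j : Fin 3) :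
    jacobian x v i j = pd j (fun w => x w i) v := by
  have hdx : DifferentiableAt ℝ x v :=
    (hx.contDiffAt (hU.mem_nhds hv)).differentiableAt (by simp)
  have hcomp : ∀ i : Fin 3, DifferentiableAt ℝ (fun w => x w i) v := fun i =>
    ((ContinuousLinearMap.proj (R := ℝ) (φ := fun _ : Fin 3 => ℝ) i).differentiableAt).comp v hdx
  have hpi : fderiv ℝ x v = ContinuousLinearMap.pi (fun i => fderiv ℝ (fun w => x w i) v) :=
    fderiv_pi hcomp
  simp [jacobian, pd, hpi]

theorem Wmat_entry (hU : IsOpen U) (hx : ContDiffOn ℝ (⊤:ℕ∞) x U)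
    (haSO : ∀ u ∈ U, a u ∈ SO3) {v : Fin 3 → ℝ} (hv : v ∈ U) (i j : Fin 3) :
    Wmat a x v i j = ∑ m, a v m i * pd j (fun w => x w m) v := by
  have hinv : (a v)⁻¹ = (a v)ᵀ := Matrix.inv_eq_left_inv (haSO v hv).1
  rw [Wmat, hinv, Matrix.mul_apply]
  refine Finset.sum_congr rfl fun m _ => ?_
  rw [Matrix.transpose_apply, jac_entry hU hx hv]

-- orthogonality identities at a point
theorem orth_sum (haSO : ∀ u ∈ U, a u ∈ SO3) {v : Fin 3 → ℝ} (hv : v ∈ U) (i j : Fin 3) :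
    ∑ m, a v m i * a v m j = (1 : Matrix (Fin 3) (Fin 3) ℝ) i j := by
  have h := (haSO v hv).1
  have := congrFun (congrFun h i) j
  rw [Matrix.mul_apply] at this
  rw [← this]
  exact Finset.sum_congr rfl fun m _ => by rw [Matrix.transpose_apply]


-- new material
theorem skew_sum (hU : IsOpen U) (ha : ∀ i k : Fin 3, ContDiffOn ℝ (⊤:ℕ∞) (fun u => a u i k) U)
    (haSO : ∀ u ∈ U, a u ∈ SO3) {v : Fin 3 → ℝ} (hv : v ∈ U) (l i j : Fin 3) :
    ∑ m, (pd l (fun w => a w m i) v * a v m j + a v m i * pd l (fun w => a w m j) v) = 0 := by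
  have h0 : pd l (fun w => ∑ m, a w m i * a w m j) v = 0 := by
    rw [pd_congr hU (fun w hw => orth_sum haSO hw i j) hv l, pd_const]
  rw [pd_sum (fun m => ((diffAt_of_cdOn hU (ha m i) hv).fun_mul (diffAt_of_cdOn hU (ha m j) hv)))] at h0
  rw [← h0]
  exact Finset.sum_congr rfl fun m _ => (pd_mul (diffAt_of_cdOn hU (ha m i) hv)
    (diffAt_of_cdOn hU (ha m j) hv) l).symm

theorem skew_mat (hU : IsOpen U) (ha : ∀ i k : Fin 3, ContDiffOn ℝ (⊤:ℕ∞) (fun u => a u i k) U)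
    (haSO : ∀ u ∈ U, a u ∈ SO3) {v : Fin 3 → ℝ} (hv : v ∈ U) (l : Fin 3) :
    (Bmat a l v)ᵀ * a v + (a v)ᵀ * Bmat a l v = 0 := by
  ext i j
  simp only [Matrix.add_apply, Matrix.mul_apply, Matrix.transpose_apply, Matrix.zero_apply,
    Bmat, Matrix.of_apply]
  rw [← Finset.sum_add_distrib]
  exact skew_sum hU ha haSO hv l i j

theorem Th_skew (hU : IsOpen U) (ha : ∀ i k : Fin 3, ContDiffOn ℝ (⊤:ℕ∞) (fun u => a u i k) U)
    (haSO : ∀ u ∈ U, a u ∈ SO3) {v : Fin 3 → ℝ} (hv : v ∈ U) (l i j : Fin 3) :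
    Th a l v j i = -(Th a l v i j) := by
  have h := skew_mat hU ha haSO hv l
  have h2 : (Bmat a l v)ᵀ * a v = -((a v)ᵀ * Bmat a l v) := by
    rw [eq_neg_iff_add_eq_zero]; exact h
  have : (Th a l v)ᵀ = -(Th a l v) := by
    rw [Th, Matrix.transpose_mul, Matrix.transpose_transpose, h2]
  calc Th a l v j i = (Th a l v)ᵀ i j := by rw [Matrix.transpose_apply]
  _ = -(Th a l v i j) := by rw [this]; simp

theorem Th_entry' (a : (Fin 3 → ℝ) → Matrix (Fin 3) (Fin 3) ℝ) (l : Fin 3) (v : Fin 3 → ℝ)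
    (i j : Fin 3) : Th a l v i j = ∑ m, a v m i * pd l (fun w => a w m j) v := by
  rw [Th, Matrix.mul_apply]
  exact Finset.sum_congr rfl fun m _ => by rw [Matrix.transpose_apply]; rfl

theorem Th_cd (hU : IsOpen U) (ha : ∀ i k : Fin 3, ContDiffOn ℝ (⊤:ℕ∞) (fun u => a u i k) U)
    (l i j : Fin 3) : ContDiffOn ℝ (⊤:ℕ∞) (fun v => Th a l v i j) U := by
  have : ContDiffOn ℝ (⊤:ℕ∞) (fun v => ∑ m, a v m i * pd l (fun w => a w m j) v) U :=
    ContDiffOn.sum fun m _ => (ha m i).mul (pd_contDiffOn hU (ha m j) l)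
  exact this.congr fun v _ => Th_entry' a l v i j

theorem Wf_cd (hU : IsOpen U) (hx : ContDiffOn ℝ (⊤:ℕ∞) x U)
    (ha : ∀ i k : Fin 3, ContDiffOn ℝ (⊤:ℕ∞) (fun u => a u i k) U)
    (haSO : ∀ u ∈ U, a u ∈ SO3) (i j : Fin 3) :
    ContDiffOn ℝ (⊤:ℕ∞) (fun v => Wmat a x v i j) U := by
  have : ContDiffOn ℝ (⊤:ℕ∞) (fun v => ∑ m, a v m i * pd j (fun w => x w m) v) U :=
    ContDiffOn.sum fun m _ => (ha m i).mul (pd_contDiffOn hU (xf_cd hx m) j)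
  exact this.congr fun v hv => Wmat_entry hU hx haSO hv i j

theorem pdW (hU : IsOpen U) (hx : ContDiffOn ℝ (⊤:ℕ∞) x U)
    (ha : ∀ i k : Fin 3, ContDiffOn ℝ (⊤:ℕ∞) (fun u => a u i k) U)
    (haSO : ∀ u ∈ U, a u ∈ SO3) {v : Fin 3 → ℝ} (hv : v ∈ U) (i j k : Fin 3) :
    pd k (fun w => Wmat a x w i j) v =
      ∑ m, (pd k (fun w => a w m i) v * pd j (fun w => x w m) v
        + a v m i * pd k (pd j (fun w => x w m)) v) := by
  rw [pd_congr hU (fun w hw => Wmat_entry hU hx haSO hw i j) hv k]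
  rw [pd_sum (fun m => (diffAt_of_cdOn hU (ha m i) hv).fun_mul
    (diffAt_of_cdOn hU (pd_contDiffOn hU (xf_cd hx m) j) hv))]
  exact Finset.sum_congr rfl fun m _ => pd_mul (diffAt_of_cdOn hU (ha m i) hv)
    (diffAt_of_cdOn hU (pd_contDiffOn hU (xf_cd hx m) j) hv) k

theorem structure_eq (hU : IsOpen U) (hx : ContDiffOn ℝ (⊤:ℕ∞) x U)
    (ha : ∀ i k : Fin 3, ContDiffOn ℝ (⊤:ℕ∞) (fun u => a u i k) U)
    (haSO : ∀ u ∈ U, a u ∈ SO3) {v : Fin 3 → ℝ} (hv : v ∈ U) (i j k : Fin 3) :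
    pd k (fun w => Wmat a x w i j) v - pd j (fun w => Wmat a x w i k) v
      = (Th a j v * Wmat a x v) i k - (Th a k v * Wmat a x v) i j := by
  have h1 := pdW hU hx ha haSO hv i j k
  have h2 := pdW hU hx ha haSO hv i k j
  -- second-derivative terms cancel
  have hcanc : ∀ m : Fin 3, pd k (pd j (fun w => x w m)) v = pd j (pd k (fun w => x w m)) v :=
    fun m => pd_comm hU (xf_cd hx m) hv k j
  -- matrix identity: Bmatᵀ * Dx = -(Th * Wmat)
  have hmat : ∀ l : Fin 3, (Bmat a l v)ᵀ * jacobian x v = -(Th a l v * Wmat a x v) := by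
    intro l
    have hinv : (a v)⁻¹ = (a v)ᵀ := Matrix.inv_eq_left_inv (haSO v hv).1
    have hright : a v * (a v)ᵀ = 1 := mul_eq_one_comm.mp (haSO v hv).1
    have hskew : (Bmat a l v)ᵀ * a v = -((a v)ᵀ * Bmat a l v) := by
      rw [eq_neg_iff_add_eq_zero]; exact skew_mat hU ha haSO hv l
    calc (Bmat a l v)ᵀ * jacobian x v = (Bmat a l v)ᵀ * (a v * (a v)ᵀ) * jacobian x v := by
          rw [hright, Matrix.mul_one]
    _ = ((Bmat a l v)ᵀ * a v) * ((a v)ᵀ * jacobian x v) := by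
          rw [Matrix.mul_assoc, Matrix.mul_assoc, Matrix.mul_assoc]
    _ = -((a v)ᵀ * Bmat a l v) * ((a v)ᵀ * jacobian x v) := by rw [hskew]
    _ = -(Th a l v * Wmat a x v) := by simp [Th, Wmat, hinv, Matrix.mul_assoc]
  have e1 : ∑ m, pd k (fun w => a w m i) v * pd j (fun w => x w m) v
      = ((Bmat a k v)ᵀ * jacobian x v) i j := by
    rw [Matrix.mul_apply]
    refine Finset.sum_congr rfl fun m _ => ?_
    rw [Matrix.transpose_apply, jac_entry hU hx hv]
    rfl
  have e2 : ∑ m, pd j (fun w => a w m i) v * pd k (fun w => x w m) v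
      = ((Bmat a j v)ᵀ * jacobian x v) i k := by
    rw [Matrix.mul_apply]
    refine Finset.sum_congr rfl fun m _ => ?_
    rw [Matrix.transpose_apply, jac_entry hU hx hv]
    rfl
  rw [h1, h2]
  rw [Finset.sum_add_distrib, Finset.sum_add_distrib]
  have : ∑ m, a v m i * pd k (pd j (fun w => x w m)) v
      = ∑ m, a v m i * pd j (pd k (fun w => x w m)) v :=
    Finset.sum_congr rfl fun m _ => by rw [hcanc m]
  rw [this]
  rw [e1, e2, hmat j, hmat k]
  simp only [Matrix.neg_apply]
  ring

theorem pdTh (hU : IsOpen U) (ha : ∀ i k : Fin 3, ContDiffOn ℝ (⊤:ℕ∞) (fun u => a u i k) U)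
    {v : Fin 3 → ℝ} (hv : v ∈ U) (l m i j : Fin 3) :
    pd l (fun w => Th a m w i j) v =
      ∑ k, (pd l (fun w => a w k i) v * pd m (fun w => a w k j) v
        + a v k i * pd l (pd m (fun w => a w k j)) v) := by
  have heq : (fun w => Th a m w i j) = fun w => ∑ k, a w k i * pd m (fun w' => a w' k j) w :=
    funext fun w => Th_entry' a m w i j
  rw [heq]
  rw [pd_sum (fun k => (diffAt_of_cdOn hU (ha k i) hv).fun_mul
    (diffAt_of_cdOn hU (pd_contDiffOn hU (ha k j) m) hv))]
  exact Finset.sum_congr rfl fun k _ => pd_mul (diffAt_of_cdOn hU (ha k i) hv)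
    (diffAt_of_cdOn hU (pd_contDiffOn hU (ha k j) m) hv) l

theorem curv (hU : IsOpen U) (ha : ∀ i k : Fin 3, ContDiffOn ℝ (⊤:ℕ∞) (fun u => a u i k) U)
    (haSO : ∀ u ∈ U, a u ∈ SO3) {v : Fin 3 → ℝ} (hv : v ∈ U) (l m : Fin 3) :
    pd l (fun w => Th a m w 1 2) v - pd m (fun w => Th a l w 1 2) v
      = Th a l v 0 1 * Th a m v 0 2 - Th a m v 0 1 * Th a l v 0 2 := by
  have h1 := pdTh hU ha hv l m 1 2
  have h2 := pdTh hU ha hv m l 1 2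
  have hmat : Th a m v * Th a l v - Th a l v * Th a m v
      = (Bmat a l v)ᵀ * Bmat a m v - (Bmat a m v)ᵀ * Bmat a l v := by
    have hright : a v * (a v)ᵀ = 1 := mul_eq_one_comm.mp (haSO v hv).1
    have hskew : ∀ p : Fin 3, (a v)ᵀ * Bmat a p v = -((Bmat a p v)ᵀ * a v) := by
      intro p
      rw [eq_neg_iff_add_eq_zero, add_comm]
      exact skew_mat hU ha haSO hv p
    have key : ∀ p p' : Fin 3, Th a p v * Th a p' v = -((Bmat a p v)ᵀ * Bmat a p' v) := by
      intro p p'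
      calc Th a p v * Th a p' v = ((a v)ᵀ * Bmat a p v) * ((a v)ᵀ * Bmat a p' v) := rfl
      _ = (-((Bmat a p v)ᵀ * a v)) * ((a v)ᵀ * Bmat a p' v) := by rw [hskew]
      _ = -((Bmat a p v)ᵀ * (a v * (a v)ᵀ) * Bmat a p' v) := by
            simp [Matrix.mul_assoc]
      _ = -((Bmat a p v)ᵀ * Bmat a p' v) := by rw [hright, Matrix.mul_one]
    rw [key m l, key l m]
    abel
  -- cancel second-derivative terms
  have hcanc : ∀ k : Fin 3, pd l (pd m (fun w => a w k 2)) v = pd m (pd l (fun w => a w k 2)) v :=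
    fun k => pd_comm hU (ha k 2) hv l m
  have hBB : pd l (fun w => Th a m w 1 2) v - pd m (fun w => Th a l w 1 2) v
      = ((Bmat a l v)ᵀ * Bmat a m v - (Bmat a m v)ᵀ * Bmat a l v) 1 2 := by
    have e : ∑ k, a v k 1 * pd l (pd m (fun w => a w k 2)) v
        = ∑ k, a v k 1 * pd m (pd l (fun w => a w k 2)) v :=
      Finset.sum_congr rfl fun k _ => by rw [hcanc k]
    rw [h1, h2, Finset.sum_add_distrib, Finset.sum_add_distrib, e]
    simp only [Matrix.sub_apply, Matrix.mul_apply, Matrix.transpose_apply, Bmat, Matrix.of_apply]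
    ring
  rw [hBB, ← hmat]
  -- entry computation using skewness
  have hsk : ∀ p i j : Fin 3, Th a p v j i = -(Th a p v i j) := fun p i j => Th_skew hU ha haSO hv p i j
  simp only [Matrix.sub_apply, Matrix.mul_apply, Fin.sum_univ_three]
  have d1 : Th a m v 1 1 = 0 := by have := hsk m 1 1; linarith
  have d2 : Th a l v 1 1 = 0 := by have := hsk l 1 1; linarith
  have d3 : Th a m v 2 2 = 0 := by have := hsk m 2 2; linarith
  have d4 : Th a l v 2 2 = 0 := by have := hsk l 2 2; linarith
  linear_combination Th a l v 0 2 * hsk m 0 1 - Th a m v 0 2 * hsk l 0 1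
    + Th a l v 1 2 * d1 - Th a m v 1 2 * d2 + Th a m v 1 2 * d4 - Th a l v 1 2 * d3


theorem alg1 (W V : Matrix (Fin 3) (Fin 3) ℝ) (s q r : Fin 3 → ℝ)
  (hWV : W * V = 1) (hVW : V * W = 1)
  (hA : ∀ j k : Fin 3, -s j * W 0 k + r j * W 2 k = -s k * W 0 j + r k * W 2 j)
  (hB : ∀ j k : Fin 3, -q j * W 0 k - r j * W 1 k = -q k * W 0 j - r k * W 1 j) :
    ∀ l m : Fin 3, r l * W 0 m = r m * W 0 l := by
  have hWV00 : W 0 0 * V 0 0 + W 0 1 * V 1 0 + W 0 2 * V 2 0 = 1 := by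
    have h := congrFun (congrFun hWV 0) 0
    simpa [Matrix.mul_apply, Fin.sum_univ_three, Matrix.one_apply] using h
  have hVW00 : V 0 0 * W 0 0 + V 0 1 * W 1 0 + V 0 2 * W 2 0 = 1 := by
    have h := congrFun (congrFun hVW 0) 0
    simpa [Matrix.mul_apply, Fin.sum_univ_three, Matrix.one_apply] using h
  have hWV01 : W 0 0 * V 0 1 + W 0 1 * V 1 1 + W 0 2 * V 2 1 = 0 := by
    have h := congrFun (congrFun hWV 0) 1
    simpa [Matrix.mul_apply, Fin.sum_univ_three, Matrix.one_apply] using h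
  have hVW01 : V 0 0 * W 0 1 + V 0 1 * W 1 1 + V 0 2 * W 2 1 = 0 := by
    have h := congrFun (congrFun hVW 0) 1
    simpa [Matrix.mul_apply, Fin.sum_univ_three, Matrix.one_apply] using h
  have hWV02 : W 0 0 * V 0 2 + W 0 1 * V 1 2 + W 0 2 * V 2 2 = 0 := by
    have h := congrFun (congrFun hWV 0) 2
    simpa [Matrix.mul_apply, Fin.sum_univ_three, Matrix.one_apply] using h
  have hVW02 : V 0 0 * W 0 2 + V 0 1 * W 1 2 + V 0 2 * W 2 2 = 0 := by
    have h := congrFun (congrFun hVW 0) 2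
    simpa [Matrix.mul_apply, Fin.sum_univ_three, Matrix.one_apply] using h
  have hWV10 : W 1 0 * V 0 0 + W 1 1 * V 1 0 + W 1 2 * V 2 0 = 0 := by
    have h := congrFun (congrFun hWV 1) 0
    simpa [Matrix.mul_apply, Fin.sum_univ_three, Matrix.one_apply] using h
  have hVW10 : V 1 0 * W 0 0 + V 1 1 * W 1 0 + V 1 2 * W 2 0 = 0 := by
    have h := congrFun (congrFun hVW 1) 0
    simpa [Matrix.mul_apply, Fin.sum_univ_three, Matrix.one_apply] using h
  have hWV11 : W 1 0 * V 0 1 + W 1 1 * V 1 1 + W 1 2 * V 2 1 = 1 := by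
    have h := congrFun (congrFun hWV 1) 1
    simpa [Matrix.mul_apply, Fin.sum_univ_three, Matrix.one_apply] using h
  have hVW11 : V 1 0 * W 0 1 + V 1 1 * W 1 1 + V 1 2 * W 2 1 = 1 := by
    have h := congrFun (congrFun hVW 1) 1
    simpa [Matrix.mul_apply, Fin.sum_univ_three, Matrix.one_apply] using h
  have hWV12 : W 1 0 * V 0 2 + W 1 1 * V 1 2 + W 1 2 * V 2 2 = 0 := by
    have h := congrFun (congrFun hWV 1) 2
    simpa [Matrix.mul_apply, Fin.sum_univ_three, Matrix.one_apply] using h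
  have hVW12 : V 1 0 * W 0 2 + V 1 1 * W 1 2 + V 1 2 * W 2 2 = 0 := by
    have h := congrFun (congrFun hVW 1) 2
    simpa [Matrix.mul_apply, Fin.sum_univ_three, Matrix.one_apply] using h
  have hWV20 : W 2 0 * V 0 0 + W 2 1 * V 1 0 + W 2 2 * V 2 0 = 0 := by
    have h := congrFun (congrFun hWV 2) 0
    simpa [Matrix.mul_apply, Fin.sum_univ_three, Matrix.one_apply] using h
  have hVW20 : V 2 0 * W 0 0 + V 2 1 * W 1 0 + V 2 2 * W 2 0 = 0 := by
    have h := congrFun (congrFun hVW 2) 0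
    simpa [Matrix.mul_apply, Fin.sum_univ_three, Matrix.one_apply] using h
  have hWV21 : W 2 0 * V 0 1 + W 2 1 * V 1 1 + W 2 2 * V 2 1 = 0 := by
    have h := congrFun (congrFun hWV 2) 1
    simpa [Matrix.mul_apply, Fin.sum_univ_three, Matrix.one_apply] using h
  have hVW21 : V 2 0 * W 0 1 + V 2 1 * W 1 1 + V 2 2 * W 2 1 = 0 := by
    have h := congrFun (congrFun hVW 2) 1
    simpa [Matrix.mul_apply, Fin.sum_univ_three, Matrix.one_apply] using h
  have hWV22 : W 2 0 * V 0 2 + W 2 1 * V 1 2 + W 2 2 * V 2 2 = 1 := by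
    have h := congrFun (congrFun hWV 2) 2
    simpa [Matrix.mul_apply, Fin.sum_univ_three, Matrix.one_apply] using h
  have hVW22 : V 2 0 * W 0 2 + V 2 1 * W 1 2 + V 2 2 * W 2 2 = 1 := by
    have h := congrFun (congrFun hVW 2) 2
    simpa [Matrix.mul_apply, Fin.sum_univ_three, Matrix.one_apply] using h
  have hav1 : (((s 0 * V 0 1) + (s 1 * V 1 1)) + (s 2 * V 2 1)) = (0) := by linear_combination (V 0 0 * V 0 1) * hA 0 0 + (V 0 0 * V 1 1) * hA 0 1 + (V 0 0 * V 2 1) * hA 0 2 + (V 1 0 * V 0 1) * hA 1 0 + (V 1 0 * V 1 1) * hA 1 1 + (V 1 0 * V 2 1) * hA 1 2 + (V 2 0 * V 0 1) * hA 2 0 + (V 2 0 * V 1 1) * hA 2 1 + (V 2 0 * V 2 1) * hA 2 2 + (((s 0 * V 0 0) + (s 1 * V 1 0)) + (s 2 * V 2 0)) * hWV01 + (((-1):ℝ) * (((r 0 * V 0 0) + (r 1 * V 1 0)) + (r 2 * V 2 0))) * hWV21 + (((-1):ℝ) * (((s 0 * V 0 1) + (s 1 * V 1 1)) + (s 2 *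 V 2 1))) * hWV00 + (((r 0 * V 0 1) + (r 1 * V 1 1)) + (r 2 * V 2 1)) * hWV20
  have hcv1 : (((r 0 * V 0 1) + (r 1 * V 1 1)) + (r 2 * V 2 1)) = (0) := by linear_combination (((-1):ℝ) * (V 0 2 * V 0 1)) * hA 0 0 + (((-1):ℝ) * (V 0 2 * V 1 1)) * hA 0 1 + (((-1):ℝ) * (V 0 2 * V 2 1)) * hA 0 2 + (((-1):ℝ) * (V 1 2 * V 0 1)) * hA 1 0 + (((-1):ℝ) * (V 1 2 * V 1 1)) * hA 1 1 + (((-1):ℝ) * (V 1 2 * V 2 1)) * hA 1 2 + (((-1):ℝ) * (V 2 2 * V 0 1)) * hA 2 0 + (((-1):ℝ) * (V 2 2 * V 1 1)) * hA 2 1 + (((-1):ℝ) * (V 2 2 * V 2 1)) * hA 2 2 + (((-1):ℝ) * (((s 0 * V 0 2) + (s 1 * V 1 2)) + (s 2 * V 2 2))) * hWV01 + (((-1):ℝ) * (((-1):ℝ) * (((r 0 * V 0 2) + (r 1 * V 1 2)) + (r 2 * V 2 2)))) * hWV21 + (((-1):ℝ) * (((-1):ℝ) * (((s 0 * V 0 1)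 + (s 1 * V 1 1)) + (s 2 * V 2 1)))) * hWV02 + (((-1):ℝ) * (((r 0 * V 0 1) + (r 1 * V 1 1)) + (r 2 * V 2 1))) * hWV22
  have hcv0 : ((((s 0 * V 0 2) + (s 1 * V 1 2)) + (s 2 * V 2 2)) + (((r 0 * V 0 0) + (r 1 * V 1 0)) + (r 2 * V 2 0))) = (0) := by linear_combination (V 0 0 * V 0 2) * hA 0 0 + (V 0 0 * V 1 2) * hA 0 1 + (V 0 0 * V 2 2) * hA 0 2 + (V 1 0 * V 0 2) * hA 1 0 + (V 1 0 * V 1 2) * hA 1 1 + (V 1 0 * V 2 2) * hA 1 2 + (V 2 0 * V 0 2) * hA 2 0 + (V 2 0 * V 1 2) * hA 2 1 + (V 2 0 * V 2 2) * hA 2 2 + (((s 0 * V 0 0) + (s 1 * V 1 0)) + (s 2 * V 2 0)) * hWV02 + (((-1):ℝ) * (((r 0 * V 0 0) + (r 1 * V 1 0)) + (r 2 * V 2 0))) * hWV22 + (((-1):ℝ) * (((s 0 * V 0 2) + (s 1 * V 1 2)) + (s 2 * V 2 2))) * hWV00 + (((r 0 * V 0 2) + (r 1 * V 1 2)) + (r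 2 * V 2 2)) * hWV20
  have hbv2 : (((q 0 * V 0 2) + (q 1 * V 1 2)) + (q 2 * V 2 2)) = (0) := by linear_combination (V 0 0 * V 0 2) * hB 0 0 + (V 0 0 * V 1 2) * hB 0 1 + (V 0 0 * V 2 2) * hB 0 2 + (V 1 0 * V 0 2) * hB 1 0 + (V 1 0 * V 1 2) * hB 1 1 + (V 1 0 * V 2 2) * hB 1 2 + (V 2 0 * V 0 2) * hB 2 0 + (V 2 0 * V 1 2) * hB 2 1 + (V 2 0 * V 2 2) * hB 2 2 + (((q 0 * V 0 0) + (q 1 * V 1 0)) + (q 2 * V 2 0)) * hWV02 + (((r 0 * V 0 0) + (r 1 * V 1 0)) + (r 2 * V 2 0)) * hWV12 + (((-1):ℝ) * (((q 0 * V 0 2) + (q 1 * V 1 2)) + (q 2 * V 2 2))) * hWV00 + (((-1):ℝ) * (((r 0 * V 0 2) + (r 1 * V 1 2)) + (r 2 * V 2 2))) * hWV10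
  have hbv1 : ((((q 0 * V 0 1) + (q 1 * V 1 1)) + (q 2 * V 2 1)) - (((r 0 * V 0 0) + (r 1 * V 1 0)) + (r 2 * V 2 0))) = (0) := by linear_combination (V 0 0 * V 0 1) * hB 0 0 + (V 0 0 * V 1 1) * hB 0 1 + (V 0 0 * V 2 1) * hB 0 2 + (V 1 0 * V 0 1) * hB 1 0 + (V 1 0 * V 1 1) * hB 1 1 + (V 1 0 * V 2 1) * hB 1 2 + (V 2 0 * V 0 1) * hB 2 0 + (V 2 0 * V 1 1) * hB 2 1 + (V 2 0 * V 2 1) * hB 2 2 + (((q 0 * V 0 0) + (q 1 * V 1 0)) + (q 2 * V 2 0)) * hWV01 + (((r 0 * V 0 0) + (r 1 * V 1 0)) + (r 2 * V 2 0)) * hWV11 + (((-1):ℝ) * (((q 0 * V 0 1) + (q 1 * V 1 1)) + (q 2 * V 2 1))) * hWV00 + (((-1):ℝ) * (((r 0 * V 0 1) + (r 1 * V 1 1)) + (r 2 * V 2 1))) * hWV10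
  have hcv2 : (((r 0 * V 0 2) + (r 1 * V 1 2)) + (r 2 * V 2 2)) = (0) := by linear_combination (V 0 1 * V 0 2) * hB 0 0 + (V 0 1 * V 1 2) * hB 0 1 + (V 0 1 * V 2 2) * hB 0 2 + (V 1 1 * V 0 2) * hB 1 0 + (V 1 1 * V 1 2) * hB 1 1 + (V 1 1 * V 2 2) * hB 1 2 + (V 2 1 * V 0 2) * hB 2 0 + (V 2 1 * V 1 2) * hB 2 1 + (V 2 1 * V 2 2) * hB 2 2 + (((q 0 * V 0 1) + (q 1 * V 1 1)) + (q 2 * V 2 1)) * hWV02 + (((r 0 * V 0 1) + (r 1 * V 1 1)) + (r 2 * V 2 1)) * hWV12 + (((-1):ℝ) * (((q 0 * V 0 2) + (q 1 * V 1 2)) + (q 2 * V 2 2))) * hWV01 + (((-1):ℝ) * (((r 0 * V 0 2) + (r 1 * V 1 2)) + (r 2 * V 2 2))) * hWV11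
  have hr0 : r 0 = ((((r 0 * V 0 0) + (r 1 * V 1 0)) + (r 2 * V 2 0)) * W 0 0) := by linear_combination W 1 0 * hcv1 + W 2 0 * hcv2 + (((-1):ℝ) * r 0) * hVW00 + (((-1):ℝ) * r 1) * hVW10 + (((-1):ℝ) * r 2) * hVW20
  have hr1 : r 1 = ((((r 0 * V 0 0) + (r 1 * V 1 0)) + (r 2 * V 2 0)) * W 0 1) := by linear_combination W 1 1 * hcv1 + W 2 1 * hcv2 + (((-1):ℝ) * r 0) * hVW01 + (((-1):ℝ) * r 1) * hVW11 + (((-1):ℝ) * r 2) * hVW21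
  have hr2 : r 2 = ((((r 0 * V 0 0) + (r 1 * V 1 0)) + (r 2 * V 2 0)) * W 0 2) := by linear_combination W 1 2 * hcv1 + W 2 2 * hcv2 + (((-1):ℝ) * r 0) * hVW02 + (((-1):ℝ) * r 1) * hVW12 + (((-1):ℝ) * r 2) * hVW22
  have hc00 : (r 0 * W 0 0) = (r 0 * W 0 0) := by linear_combination W 0 0 * hr0 + (((-1):ℝ) * W 0 0) * hr0
  have hc01 : (r 0 * W 0 1) = (r 1 * W 0 0) := by linear_combination W 0 1 * hr0 + (((-1):ℝ) * W 0 0) * hr1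
  have hc02 : (r 0 * W 0 2) = (r 2 * W 0 0) := by linear_combination W 0 2 * hr0 + (((-1):ℝ) * W 0 0) * hr2
  have hc10 : (r 1 * W 0 0) = (r 0 * W 0 1) := by linear_combination W 0 0 * hr1 + (((-1):ℝ) * W 0 1) * hr0
  have hc11 : (r 1 * W 0 1) = (r 1 * W 0 1) := by linear_combination W 0 1 * hr1 + (((-1):ℝ) * W 0 1) * hr1
  have hc12 : (r 1 * W 0 2) = (r 2 * W 0 1) := by linear_combination W 0 2 * hr1 + (((-1):ℝ) * W 0 1) * hr2
  have hc20 : (r 2 * W 0 0) = (r 0 * W 0 2) := by linear_combination W 0 0 * hr2 + (((-1):ℝ) * W 0 2) * hr0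
  have hc21 : (r 2 * W 0 1) = (r 1 * W 0 2) := by linear_combination W 0 1 * hr2 + (((-1):ℝ) * W 0 2) * hr1
  have hc22 : (r 2 * W 0 2) = (r 2 * W 0 2) := by linear_combination W 0 2 * hr2 + (((-1):ℝ) * W 0 2) * hr2
  intro l m
  fin_cases l <;> fin_cases m <;>
    first | exact hc00 | exact hc01 | exact hc02 | exact hc10 | exact hc11 | exact hc12 | exact hc20 | exact hc21 | exact hc22

theorem alg2 (W V : Matrix (Fin 3) (Fin 3) ℝ) (s q r : Fin 3 → ℝ)
    (P dr : Fin 3 → Fin 3 → ℝ)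
  (hWV : W * V = 1) (hVW : V * W = 1)
  (hA : ∀ j k : Fin 3, -s j * W 0 k + r j * W 2 k = -s k * W 0 j + r k * W 2 j)
  (hB : ∀ j k : Fin 3, -q j * W 0 k - r j * W 1 k = -q k * W 0 j - r k * W 1 j)
  (hE2 : ∀ j k : Fin 3, P k j - P j k = s j * W 1 k + q j * W 2 k - (s k * W 1 j + q k * W 2 j))
  (hstar : ∀ p l m : Fin 3, dr p l * W 0 m + r l * P p m = dr p m * W 0 l + r m * P p l)
  (hcurv : ∀ l m : Fin 3, dr l m - dr m l = s l * q m - s m * q l) :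
    W 0 0 * (P 1 2 - P 2 1) + W 0 1 * (P 2 0 - P 0 2) + W 0 2 * (P 0 1 - P 1 0) = 0 := by
  have hWV00 : W 0 0 * V 0 0 + W 0 1 * V 1 0 + W 0 2 * V 2 0 = 1 := by
    have h := congrFun (congrFun hWV 0) 0
    simpa [Matrix.mul_apply, Fin.sum_univ_three, Matrix.one_apply] using h
  have hVW00 : V 0 0 * W 0 0 + V 0 1 * W 1 0 + V 0 2 * W 2 0 = 1 := by
    have h := congrFun (congrFun hVW 0) 0
    simpa [Matrix.mul_apply, Fin.sum_univ_three, Matrix.one_apply] using h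
  have hWV01 : W 0 0 * V 0 1 + W 0 1 * V 1 1 + W 0 2 * V 2 1 = 0 := by
    have h := congrFun (congrFun hWV 0) 1
    simpa [Matrix.mul_apply, Fin.sum_univ_three, Matrix.one_apply] using h
  have hVW01 : V 0 0 * W 0 1 + V 0 1 * W 1 1 + V 0 2 * W 2 1 = 0 := by
    have h := congrFun (congrFun hVW 0) 1
    simpa [Matrix.mul_apply, Fin.sum_univ_three, Matrix.one_apply] using h
  have hWV02 : W 0 0 * V 0 2 + W 0 1 * V 1 2 + W 0 2 * V 2 2 = 0 := by
    have h := congrFun (congrFun hWV 0) 2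
    simpa [Matrix.mul_apply, Fin.sum_univ_three, Matrix.one_apply] using h
  have hVW02 : V 0 0 * W 0 2 + V 0 1 * W 1 2 + V 0 2 * W 2 2 = 0 := by
    have h := congrFun (congrFun hVW 0) 2
    simpa [Matrix.mul_apply, Fin.sum_univ_three, Matrix.one_apply] using h
  have hWV10 : W 1 0 * V 0 0 + W 1 1 * V 1 0 + W 1 2 * V 2 0 = 0 := by
    have h := congrFun (congrFun hWV 1) 0
    simpa [Matrix.mul_apply, Fin.sum_univ_three, Matrix.one_apply] using h
  have hVW10 : V 1 0 * W 0 0 + V 1 1 * W 1 0 + V 1 2 * W 2 0 = 0 := by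
    have h := congrFun (congrFun hVW 1) 0
    simpa [Matrix.mul_apply, Fin.sum_univ_three, Matrix.one_apply] using h
  have hWV11 : W 1 0 * V 0 1 + W 1 1 * V 1 1 + W 1 2 * V 2 1 = 1 := by
    have h := congrFun (congrFun hWV 1) 1
    simpa [Matrix.mul_apply, Fin.sum_univ_three, Matrix.one_apply] using h
  have hVW11 : V 1 0 * W 0 1 + V 1 1 * W 1 1 + V 1 2 * W 2 1 = 1 := by
    have h := congrFun (congrFun hVW 1) 1
    simpa [Matrix.mul_apply, Fin.sum_univ_three, Matrix.one_apply] using h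
  have hWV12 : W 1 0 * V 0 2 + W 1 1 * V 1 2 + W 1 2 * V 2 2 = 0 := by
    have h := congrFun (congrFun hWV 1) 2
    simpa [Matrix.mul_apply, Fin.sum_univ_three, Matrix.one_apply] using h
  have hVW12 : V 1 0 * W 0 2 + V 1 1 * W 1 2 + V 1 2 * W 2 2 = 0 := by
    have h := congrFun (congrFun hVW 1) 2
    simpa [Matrix.mul_apply, Fin.sum_univ_three, Matrix.one_apply] using h
  have hWV20 : W 2 0 * V 0 0 + W 2 1 * V 1 0 + W 2 2 * V 2 0 = 0 := by
    have h := congrFun (congrFun hWV 2) 0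
    simpa [Matrix.mul_apply, Fin.sum_univ_three, Matrix.one_apply] using h
  have hVW20 : V 2 0 * W 0 0 + V 2 1 * W 1 0 + V 2 2 * W 2 0 = 0 := by
    have h := congrFun (congrFun hVW 2) 0
    simpa [Matrix.mul_apply, Fin.sum_univ_three, Matrix.one_apply] using h
  have hWV21 : W 2 0 * V 0 1 + W 2 1 * V 1 1 + W 2 2 * V 2 1 = 0 := by
    have h := congrFun (congrFun hWV 2) 1
    simpa [Matrix.mul_apply, Fin.sum_univ_three, Matrix.one_apply] using h
  have hVW21 : V 2 0 * W 0 1 + V 2 1 * W 1 1 + V 2 2 * W 2 1 = 0 := by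
    have h := congrFun (congrFun hVW 2) 1
    simpa [Matrix.mul_apply, Fin.sum_univ_three, Matrix.one_apply] using h
  have hWV22 : W 2 0 * V 0 2 + W 2 1 * V 1 2 + W 2 2 * V 2 2 = 1 := by
    have h := congrFun (congrFun hWV 2) 2
    simpa [Matrix.mul_apply, Fin.sum_univ_three, Matrix.one_apply] using h
  have hVW22 : V 2 0 * W 0 2 + V 2 1 * W 1 2 + V 2 2 * W 2 2 = 1 := by
    have h := congrFun (congrFun hVW 2) 2
    simpa [Matrix.mul_apply, Fin.sum_univ_three, Matrix.one_apply] using h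
  have hav1 : (((s 0 * V 0 1) + (s 1 * V 1 1)) + (s 2 * V 2 1)) = (0) := by linear_combination (V 0 0 * V 0 1) * hA 0 0 + (V 0 0 * V 1 1) * hA 0 1 + (V 0 0 * V 2 1) * hA 0 2 + (V 1 0 * V 0 1) * hA 1 0 + (V 1 0 * V 1 1) * hA 1 1 + (V 1 0 * V 2 1) * hA 1 2 + (V 2 0 * V 0 1) * hA 2 0 + (V 2 0 * V 1 1) * hA 2 1 + (V 2 0 * V 2 1) * hA 2 2 + (((s 0 * V 0 0) + (s 1 * V 1 0)) + (s 2 * V 2 0)) * hWV01 + (((-1):ℝ) * (((r 0 * V 0 0) + (r 1 * V 1 0)) + (r 2 * V 2 0))) * hWV21 + (((-1):ℝ) * (((s 0 * V 0 1) + (s 1 * V 1 1)) + (s 2 * V 2 1))) * hWV00 + (((r 0 * V 0 1) + (r 1 * V 1 1)) + (r 2 * V 2 1)) * hWV20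
  have hcv1 : (((r 0 * V 0 1) + (r 1 * V 1 1)) + (r 2 * V 2 1)) = (0) := by linear_combination (((-1):ℝ) * (V 0 2 * V 0 1)) * hA 0 0 + (((-1):ℝ) * (V 0 2 * V 1 1)) * hA 0 1 + (((-1):ℝ) * (V 0 2 * V 2 1)) * hA 0 2 + (((-1):ℝ) * (V 1 2 * V 0 1)) * hA 1 0 + (((-1):ℝ) * (V 1 2 * V 1 1)) * hA 1 1 + (((-1):ℝ) * (V 1 2 * V 2 1)) * hA 1 2 + (((-1):ℝ) * (V 2 2 * V 0 1)) * hA 2 0 + (((-1):ℝ) * (V 2 2 * V 1 1)) * hA 2 1 + (((-1):ℝ) * (V 2 2 * V 2 1)) * hA 2 2 + (((-1):ℝ) * (((s 0 * V 0 2) + (s 1 * V 1 2)) + (s 2 * V 2 2))) * hWV01 + (((-1):ℝ) * (((-1):ℝ) * (((r 0 * V 0 2) + (r 1 * V 1 2)) + (r 2 * V 2 2)))) * hWV21 + (((-1):ℝ) * (((-1):ℝ) * (((s 0 * V 0 1) + (s 1 * V 1 1)) + (s 2 * V 2 1)))) * hWV02 + (((-1):ℝ) * (((r 0 * V 0 1)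 + (r 1 * V 1 1)) + (r 2 * V 2 1))) * hWV22
  have hcv0 : ((((s 0 * V 0 2) + (s 1 * V 1 2)) + (s 2 * V 2 2)) + (((r 0 * V 0 0) + (r 1 * V 1 0)) + (r 2 * V 2 0))) = (0) := by linear_combination (V 0 0 * V 0 2) * hA 0 0 + (V 0 0 * V 1 2) * hA 0 1 + (V 0 0 * V 2 2) * hA 0 2 + (V 1 0 * V 0 2) * hA 1 0 + (V 1 0 * V 1 2) * hA 1 1 + (V 1 0 * V 2 2) * hA 1 2 + (V 2 0 * V 0 2) * hA 2 0 + (V 2 0 * V 1 2) * hA 2 1 + (V 2 0 * V 2 2) * hA 2 2 + (((s 0 * V 0 0) + (s 1 * V 1 0)) + (s 2 * V 2 0)) * hWV02 + (((-1):ℝ) * (((r 0 * V 0 0) + (r 1 * V 1 0)) + (r 2 * V 2 0))) * hWV22 + (((-1):ℝ) * (((s 0 * V 0 2) + (s 1 * V 1 2)) + (s 2 * V 2 2))) * hWV00 + (((r 0 * V 0 2) + (r 1 * V 1 2)) + (r 2 * V 2 2)) * hWV20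
  have hbv2 : (((q 0 * V 0 2) + (q 1 * V 1 2)) + (q 2 * V 2 2)) = (0) := by linear_combination (V 0 0 * V 0 2) * hB 0 0 + (V 0 0 * V 1 2) * hB 0 1 + (V 0 0 * V 2 2) * hB 0 2 + (V 1 0 * V 0 2) * hB 1 0 + (V 1 0 * V 1 2) * hB 1 1 + (V 1 0 * V 2 2) * hB 1 2 + (V 2 0 * V 0 2) * hB 2 0 + (V 2 0 * V 1 2) * hB 2 1 + (V 2 0 * V 2 2) * hB 2 2 + (((q 0 * V 0 0) + (q 1 * V 1 0)) + (q 2 * V 2 0)) * hWV02 + (((r 0 * V 0 0) + (r 1 * V 1 0)) + (r 2 * V 2 0)) * hWV12 + (((-1):ℝ) * (((q 0 * V 0 2) + (q 1 * V 1 2)) + (q 2 * V 2 2))) * hWV00 + (((-1):ℝ) * (((r 0 * V 0 2) + (r 1 * V 1 2)) + (r 2 * V 2 2))) * hWV10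
  have hbv1 : ((((q 0 * V 0 1) + (q 1 * V 1 1)) + (q 2 * V 2 1)) - (((r 0 * V 0 0) + (r 1 * V 1 0)) + (r 2 * V 2 0))) = (0) := by linear_combination (V 0 0 * V 0 1) * hB 0 0 + (V 0 0 * V 1 1) * hB 0 1 + (V 0 0 * V 2 1) * hB 0 2 + (V 1 0 * V 0 1) * hB 1 0 + (V 1 0 * V 1 1) * hB 1 1 + (V 1 0 * V 2 1) * hB 1 2 + (V 2 0 * V 0 1) * hB 2 0 + (V 2 0 * V 1 1) * hB 2 1 + (V 2 0 * V 2 1) * hB 2 2 + (((q 0 * V 0 0) + (q 1 * V 1 0)) + (q 2 * V 2 0)) * hWV01 + (((r 0 * V 0 0) + (r 1 * V 1 0)) + (r 2 * V 2 0)) * hWV11 + (((-1):ℝ) * (((q 0 * V 0 1) + (q 1 * V 1 1)) + (q 2 * V 2 1))) * hWV00 + (((-1):ℝ) * (((r 0 * V 0 1) + (r 1 * V 1 1)) + (r 2 * V 2 1))) * hWV10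
  have hcv2 : (((r 0 * V 0 2) + (r 1 * V 1 2)) + (r 2 * V 2 2)) = (0) := by linear_combination (V 0 1 * V 0 2) * hB 0 0 + (V 0 1 * V 1 2) * hB 0 1 + (V 0 1 * V 2 2) * hB 0 2 + (V 1 1 * V 0 2) * hB 1 0 + (V 1 1 * V 1 2) * hB 1 1 + (V 1 1 * V 2 2) * hB 1 2 + (V 2 1 * V 0 2) * hB 2 0 + (V 2 1 * V 1 2) * hB 2 1 + (V 2 1 * V 2 2) * hB 2 2 + (((q 0 * V 0 1) + (q 1 * V 1 1)) + (q 2 * V 2 1)) * hWV02 + (((r 0 * V 0 1) + (r 1 * V 1 1)) + (r 2 * V 2 1)) * hWV12 + (((-1):ℝ) * (((q 0 * V 0 2) + (q 1 * V 1 2)) + (q 2 * V 2 2))) * hWV01 + (((-1):ℝ) * (((r 0 * V 0 2) + (r 1 * V 1 2)) + (r 2 * V 2 2))) * hWV11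
  have hM : (((((((((((P 0 0 * V 0 1) * V 0 2) + ((P 0 1 * V 0 1) * V 1 2)) + ((P 0 2 * V 0 1) * V 2 2)) + ((P 1 0 * V 1 1) * V 0 2)) + ((P 1 1 * V 1 1) * V 1 2)) + ((P 1 2 * V 1 1) * V 2 2)) + ((P 2 0 * V 2 1) * V 0 2)) + ((P 2 1 * V 2 1) * V 1 2)) + ((P 2 2 * V 2 1) * V 2 2)) - ((((((((((P 0 0 * V 0 2) * V 0 1) + ((P 0 1 * V 0 2) * V 1 1)) + ((P 0 2 * V 0 2) * V 2 1)) + ((P 1 0 * V 1 2) * V 0 1)) + ((P 1 1 * V 1 2) * V 1 1)) + ((P 1 2 * V 1 2) * V 2 1)) + ((P 2 0 * V 2 2) * V 0 1)) + ((P 2 1 * V 2 2) * V 1 1)) + ((P 2 2 * V 2 2) * V 2 1))) = ((2) * (((s 0 * V 0 2) + (s 1 * V 1 2)) + (s 2 * V 2 2))) := by linear_combination (V 0 1 * V 0 2) * hE2 0 0 + (V 1 1 * V 0 2) * hE2 0 1 + (V 2 1 * V 0 2) * hE2 0 2 + (V 0 1 * V 1 2) * hE2 1 0 + (V 1 1 *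 V 1 2) * hE2 1 1 + (V 2 1 * V 1 2) * hE2 1 2 + (V 0 1 * V 2 2) * hE2 2 0 + (V 1 1 * V 2 2) * hE2 2 1 + (V 2 1 * V 2 2) * hE2 2 2 + (((s 0 * V 0 2) + (s 1 * V 1 2)) + (s 2 * V 2 2)) * hWV11 + (((q 0 * V 0 2) + (q 1 * V 1 2)) + (q 2 * V 2 2)) * hWV21 + (((-1):ℝ) * (((s 0 * V 0 1) + (s 1 * V 1 1)) + (s 2 * V 2 1))) * hWV12 + (((-1):ℝ) * (((q 0 * V 0 1) + (q 1 * V 1 1)) + (q 2 * V 2 1))) * hWV22 + ((-1):ℝ) * hbv1 + ((-1):ℝ) * hcv0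
  have hK12 : ((((r 0 * V 0 0) + (r 1 * V 1 0)) + (r 2 * V 2 0)) * ((((((((((P 0 0 * V 0 1) * V 0 2) + ((P 0 1 * V 0 1) * V 1 2)) + ((P 0 2 * V 0 1) * V 2 2)) + ((P 1 0 * V 1 1) * V 0 2)) + ((P 1 1 * V 1 1) * V 1 2)) + ((P 1 2 * V 1 1) * V 2 2)) + ((P 2 0 * V 2 1) * V 0 2)) + ((P 2 1 * V 2 1) * V 1 2)) + ((P 2 2 * V 2 1) * V 2 2))) = ((((((((((dr 0 0 * V 0 1) * V 0 2) + ((dr 0 1 * V 0 1) * V 1 2)) + ((dr 0 2 * V 0 1) * V 2 2)) + ((dr 1 0 * V 1 1) * V 0 2)) + ((dr 1 1 * V 1 1) * V 1 2)) + ((dr 1 2 * V 1 1) * V 2 2)) + ((dr 2 0 * V 2 1) * V 0 2)) + ((dr 2 1 * V 2 1) * V 1 2)) + ((dr 2 2 * V 2 1) * V 2 2)) := by linear_combination ((V 0 0 * V 0 1) * V 0 2) * hstar 0 0 0 + ((V 0 0 * V 0 1) * V 1 2) * hstar 0 0 1 + ((V 0 0 * V 0 1) * V 2 2) * hstar 0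 0 2 + ((V 1 0 * V 0 1) * V 0 2) * hstar 0 1 0 + ((V 1 0 * V 0 1) * V 1 2) * hstar 0 1 1 + ((V 1 0 * V 0 1) * V 2 2) * hstar 0 1 2 + ((V 2 0 * V 0 1) * V 0 2) * hstar 0 2 0 + ((V 2 0 * V 0 1) * V 1 2) * hstar 0 2 1 + ((V 2 0 * V 0 1) * V 2 2) * hstar 0 2 2 + ((V 0 0 * V 1 1) * V 0 2) * hstar 1 0 0 + ((V 0 0 * V 1 1) * V 1 2) * hstar 1 0 1 + ((V 0 0 * V 1 1) * V 2 2) * hstar 1 0 2 + ((V 1 0 * V 1 1) * V 0 2) * hstar 1 1 0 + ((V 1 0 * V 1 1) * V 1 2) * hstar 1 1 1 + ((V 1 0 * V 1 1) * V 2 2) * hstar 1 1 2 + ((V 2 0 * V 1 1) * V 0 2) * hstar 1 2 0 + ((V 2 0 * V 1 1) * V 1 2) * hstar 1 2 1 + ((V 2 0 * V 1 1) * V 2 2) * hstar 1 2 2 + ((V 0 0 * V 2 1) * V 0 2) * hstar 2 0 0 + ((V 0 0 * V 2 1) * V 1 2) * hstar 2 0 1 + ((V 0 0 * V 2 1) *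 V 2 2) * hstar 2 0 2 + ((V 1 0 * V 2 1) * V 0 2) * hstar 2 1 0 + ((V 1 0 * V 2 1) * V 1 2) * hstar 2 1 1 + ((V 1 0 * V 2 1) * V 2 2) * hstar 2 1 2 + ((V 2 0 * V 2 1) * V 0 2) * hstar 2 2 0 + ((V 2 0 * V 2 1) * V 1 2) * hstar 2 2 1 + ((V 2 0 * V 2 1) * V 2 2) * hstar 2 2 2 + ((((((((((dr 0 0 * V 0 1) * V 0 2) + ((dr 0 1 * V 0 1) * V 1 2)) + ((dr 0 2 * V 0 1) * V 2 2)) + ((dr 1 0 * V 1 1) * V 0 2)) + ((dr 1 1 * V 1 1) * V 1 2)) + ((dr 1 2 * V 1 1) * V 2 2)) + ((dr 2 0 * V 2 1) * V 0 2)) + ((dr 2 1 * V 2 1) * V 1 2)) + ((dr 2 2 * V 2 1) * V 2 2)) * hWV00 + (((-1):ℝ) * ((((((((((dr 0 0 * V 0 1) * V 0 0) + ((dr 0 1 * V 0 1) * V 1 0)) + ((dr 0 2 * V 0 1) * V 2 0)) + ((dr 1 0 * V 1 1) * V 0 0)) + ((dr 1 1 * V 1 1) * V 1 0)) + ((dr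 1 2 * V 1 1) * V 2 0)) + ((dr 2 0 * V 2 1) * V 0 0)) + ((dr 2 1 * V 2 1) * V 1 0)) + ((dr 2 2 * V 2 1) * V 2 0))) * hWV02 + ((((((((((P 0 0 * V 0 1) * V 0 0) + ((P 0 1 * V 0 1) * V 1 0)) + ((P 0 2 * V 0 1) * V 2 0)) + ((P 1 0 * V 1 1) * V 0 0)) + ((P 1 1 * V 1 1) * V 1 0)) + ((P 1 2 * V 1 1) * V 2 0)) + ((P 2 0 * V 2 1) * V 0 0)) + ((P 2 1 * V 2 1) * V 1 0)) + ((P 2 2 * V 2 1) * V 2 0)) * hcv2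
  have hK21 : ((((r 0 * V 0 0) + (r 1 * V 1 0)) + (r 2 * V 2 0)) * ((((((((((P 0 0 * V 0 2) * V 0 1) + ((P 0 1 * V 0 2) * V 1 1)) + ((P 0 2 * V 0 2) * V 2 1)) + ((P 1 0 * V 1 2) * V 0 1)) + ((P 1 1 * V 1 2) * V 1 1)) + ((P 1 2 * V 1 2) * V 2 1)) + ((P 2 0 * V 2 2) * V 0 1)) + ((P 2 1 * V 2 2) * V 1 1)) + ((P 2 2 * V 2 2) * V 2 1))) = ((((((((((dr 0 0 * V 0 2) * V 0 1) + ((dr 0 1 * V 0 2) * V 1 1)) + ((dr 0 2 * V 0 2) * V 2 1)) + ((dr 1 0 * V 1 2) * V 0 1)) + ((dr 1 1 * V 1 2) * V 1 1)) + ((dr 1 2 * V 1 2) * V 2 1)) + ((dr 2 0 * V 2 2) * V 0 1)) + ((dr 2 1 * V 2 2) * V 1 1)) + ((dr 2 2 * V 2 2) * V 2 1)) := by linear_combination ((V 0 0 * V 0 2) * V 0 1) * hstar 0 0 0 + ((V 0 0 * V 0 2) * V 1 1) * hstar 0 0 1 + ((V 0 0 * V 0 2) * V 2 1) * hstar 0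 0 2 + ((V 1 0 * V 0 2) * V 0 1) * hstar 0 1 0 + ((V 1 0 * V 0 2) * V 1 1) * hstar 0 1 1 + ((V 1 0 * V 0 2) * V 2 1) * hstar 0 1 2 + ((V 2 0 * V 0 2) * V 0 1) * hstar 0 2 0 + ((V 2 0 * V 0 2) * V 1 1) * hstar 0 2 1 + ((V 2 0 * V 0 2) * V 2 1) * hstar 0 2 2 + ((V 0 0 * V 1 2) * V 0 1) * hstar 1 0 0 + ((V 0 0 * V 1 2) * V 1 1) * hstar 1 0 1 + ((V 0 0 * V 1 2) * V 2 1) * hstar 1 0 2 + ((V 1 0 * V 1 2) * V 0 1) * hstar 1 1 0 + ((V 1 0 * V 1 2) * V 1 1) * hstar 1 1 1 + ((V 1 0 * V 1 2) * V 2 1) * hstar 1 1 2 + ((V 2 0 * V 1 2) * V 0 1) * hstar 1 2 0 + ((V 2 0 * V 1 2) * V 1 1) * hstar 1 2 1 + ((V 2 0 * V 1 2) * V 2 1) * hstar 1 2 2 + ((V 0 0 * V 2 2) * V 0 1) * hstar 2 0 0 + ((V 0 0 * V 2 2) * V 1 1) * hstar 2 0 1 + ((V 0 0 * V 2 2) *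 V 2 1) * hstar 2 0 2 + ((V 1 0 * V 2 2) * V 0 1) * hstar 2 1 0 + ((V 1 0 * V 2 2) * V 1 1) * hstar 2 1 1 + ((V 1 0 * V 2 2) * V 2 1) * hstar 2 1 2 + ((V 2 0 * V 2 2) * V 0 1) * hstar 2 2 0 + ((V 2 0 * V 2 2) * V 1 1) * hstar 2 2 1 + ((V 2 0 * V 2 2) * V 2 1) * hstar 2 2 2 + ((((((((((dr 0 0 * V 0 2) * V 0 1) + ((dr 0 1 * V 0 2) * V 1 1)) + ((dr 0 2 * V 0 2) * V 2 1)) + ((dr 1 0 * V 1 2) * V 0 1)) + ((dr 1 1 * V 1 2) * V 1 1)) + ((dr 1 2 * V 1 2) * V 2 1)) + ((dr 2 0 * V 2 2) * V 0 1)) + ((dr 2 1 * V 2 2) * V 1 1)) + ((dr 2 2 * V 2 2) * V 2 1)) * hWV00 + (((-1):ℝ) * ((((((((((dr 0 0 * V 0 2) * V 0 0) + ((dr 0 1 * V 0 2) * V 1 0)) + ((dr 0 2 * V 0 2) * V 2 0)) + ((dr 1 0 * V 1 2) * V 0 0)) + ((dr 1 1 * V 1 2) * V 1 0)) + ((dr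 1 2 * V 1 2) * V 2 0)) + ((dr 2 0 * V 2 2) * V 0 0)) + ((dr 2 1 * V 2 2) * V 1 0)) + ((dr 2 2 * V 2 2) * V 2 0))) * hWV01 + ((((((((((P 0 0 * V 0 2) * V 0 0) + ((P 0 1 * V 0 2) * V 1 0)) + ((P 0 2 * V 0 2) * V 2 0)) + ((P 1 0 * V 1 2) * V 0 0)) + ((P 1 1 * V 1 2) * V 1 0)) + ((P 1 2 * V 1 2) * V 2 0)) + ((P 2 0 * V 2 2) * V 0 0)) + ((P 2 1 * V 2 2) * V 1 0)) + ((P 2 2 * V 2 2) * V 2 0)) * hcv1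
  have hKdiff : (((((((((((dr 0 0 * V 0 1) * V 0 2) + ((dr 0 1 * V 0 1) * V 1 2)) + ((dr 0 2 * V 0 1) * V 2 2)) + ((dr 1 0 * V 1 1) * V 0 2)) + ((dr 1 1 * V 1 1) * V 1 2)) + ((dr 1 2 * V 1 1) * V 2 2)) + ((dr 2 0 * V 2 1) * V 0 2)) + ((dr 2 1 * V 2 1) * V 1 2)) + ((dr 2 2 * V 2 1) * V 2 2)) - ((((((((((dr 0 0 * V 0 2) * V 0 1) + ((dr 0 1 * V 0 2) * V 1 1)) + ((dr 0 2 * V 0 2) * V 2 1)) + ((dr 1 0 * V 1 2) * V 0 1)) + ((dr 1 1 * V 1 2) * V 1 1)) + ((dr 1 2 * V 1 2) * V 2 1)) + ((dr 2 0 * V 2 2) * V 0 1)) + ((dr 2 1 * V 2 2) * V 1 1)) + ((dr 2 2 * V 2 2) * V 2 1))) = (((((s 0 * V 0 1) + (s 1 * V 1 1)) + (s 2 * V 2 1)) * (((q 0 * V 0 2) + (q 1 * V 1 2)) + (q 2 * V 2 2))) - ((((s 0 * V 0 2) + (s 1 * V 1 2)) + (s 2 * V 2 2)) * (((q 0 *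 V 0 1) + (q 1 * V 1 1)) + (q 2 * V 2 1)))) := by linear_combination (V 0 1 * V 0 2) * hcurv 0 0 + (V 0 1 * V 1 2) * hcurv 0 1 + (V 0 1 * V 2 2) * hcurv 0 2 + (V 1 1 * V 0 2) * hcurv 1 0 + (V 1 1 * V 1 2) * hcurv 1 1 + (V 1 1 * V 2 2) * hcurv 1 2 + (V 2 1 * V 0 2) * hcurv 2 0 + (V 2 1 * V 1 2) * hcurv 2 1 + (V 2 1 * V 2 2) * hcurv 2 2
  have hav2sq : (((((s 0 * V 0 2) + (s 1 * V 1 2)) + (s 2 * V 2 2)) * (((s 0 * V 0 2) + (s 1 * V 1 2)) + (s 2 * V 2 2))) * (3)) = (0) := by linear_combination (((r 0 * V 0 0) + (r 1 * V 1 0)) + (r 2 * V 2 0)) * hM + ((-1):ℝ) * hK12 + (1) * hK21 + ((-1):ℝ) * hKdiff + ((3) * (((s 0 * V 0 2) + (s 1 * V 1 2)) + (s 2 * V 2 2))) * hcv0 + (((-1):ℝ) * (((q 0 * V 0 2) + (q 1 * V 1 2)) + (q 2 * V 2 2))) * hav1 + (((s 0 * V 0 2) + (s 1 * V 1 2)) +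 (s 2 * V 2 2)) * hbv1
  have hav2 : (((s 0 * V 0 2) + (s 1 * V 1 2)) + (s 2 * V 2 2)) = (0) := by
    have hsq : ((((s 0 * V 0 2) + (s 1 * V 1 2)) + (s 2 * V 2 2)))^2 = 0 := by linear_combination hav2sq / 3
    exact pow_eq_zero_iff two_ne_zero |>.mp hsq
  have hcv0z : (((r 0 * V 0 0) + (r 1 * V 1 0)) + (r 2 * V 2 0)) = (0) := by linear_combination (1) * hcv0 + ((-1):ℝ) * hav2
  have hbv1z : (((q 0 * V 0 1) + (q 1 * V 1 1)) + (q 2 * V 2 1)) = (0) := by linear_combination (1) * hbv1 + (1) * hcv0z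
  have hs0 : s 0 = ((((s 0 * V 0 0) + (s 1 * V 1 0)) + (s 2 * V 2 0)) * W 0 0) := by linear_combination W 1 0 * hav1 + W 2 0 * hav2 + (((-1):ℝ) * s 0) * hVW00 + (((-1):ℝ) * s 1) * hVW10 + (((-1):ℝ) * s 2) * hVW20
  have hq0 : q 0 = ((((q 0 * V 0 0) + (q 1 * V 1 0)) + (q 2 * V 2 0)) * W 0 0) := by linear_combination W 1 0 * hbv1z + W 2 0 * hbv2 + (((-1):ℝ) * q 0) * hVW00 + (((-1):ℝ) * q 1) * hVW10 + (((-1):ℝ) * q 2) * hVW20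
  have hs1 : s 1 = ((((s 0 * V 0 0) + (s 1 * V 1 0)) + (s 2 * V 2 0)) * W 0 1) := by linear_combination W 1 1 * hav1 + W 2 1 * hav2 + (((-1):ℝ) * s 0) * hVW01 + (((-1):ℝ) * s 1) * hVW11 + (((-1):ℝ) * s 2) * hVW21
  have hq1 : q 1 = ((((q 0 * V 0 0) + (q 1 * V 1 0)) + (q 2 * V 2 0)) * W 0 1) := by linear_combination W 1 1 * hbv1z + W 2 1 * hbv2 + (((-1):ℝ) * q 0) * hVW01 + (((-1):ℝ) * q 1) * hVW11 + (((-1):ℝ) * q 2) * hVW21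
  have hs2 : s 2 = ((((s 0 * V 0 0) + (s 1 * V 1 0)) + (s 2 * V 2 0)) * W 0 2) := by linear_combination W 1 2 * hav1 + W 2 2 * hav2 + (((-1):ℝ) * s 0) * hVW02 + (((-1):ℝ) * s 1) * hVW12 + (((-1):ℝ) * s 2) * hVW22
  have hq2 : q 2 = ((((q 0 * V 0 0) + (q 1 * V 1 0)) + (q 2 * V 2 0)) * W 0 2) := by linear_combination W 1 2 * hbv1z + W 2 2 * hbv2 + (((-1):ℝ) * q 0) * hVW02 + (((-1):ℝ) * q 1) * hVW12 + (((-1):ℝ) * q 2) * hVW22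
  linear_combination W 0 0 * hE2 2 1 + W 0 1 * hE2 0 2 + W 0 2 * hE2 1 0 + ((W 0 1 * W 1 2) - (W 0 2 * W 1 1)) * hs0 + ((W 0 2 * W 1 0) - (W 0 0 * W 1 2)) * hs1 + ((W 0 0 * W 1 1) - (W 0 1 * W 1 0)) * hs2 + ((W 0 1 * W 2 2) - (W 0 2 * W 2 1)) * hq0 + ((W 0 2 * W 2 0) - (W 0 0 * W 2 2)) * hq1 + ((W 0 0 * W 2 1) - (W 0 1 * W 2 0)) * hq2


end AuxOmega

/-- if `ω = a⁻¹ dx` is a coframing (flat metric) with `dω² = dω³ = 0`,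
then `ω¹ ∧ dω¹ = 0` (the general claim proved in Example 4.1 of the paper). -/
theorem omega1_wedge_domega1_eq_zero
    (U : Set (Fin 3 → ℝ)) (hU : IsOpen U)
    (x : (Fin 3 → ℝ) → (Fin 3 → ℝ)) (a : (Fin 3 → ℝ) → Matrix (Fin 3) (Fin 3) ℝ)
    (hx : ContDiffOn ℝ (⊤ : ℕ∞) x U)
    (hjac : ∀ u ∈ U, IsUnit (jacobian x u).det)
    (ha : ∀ i k : Fin 3, ContDiffOn ℝ (⊤ : ℕ∞) (fun u => a u i k) U)
    (haSO : ∀ u ∈ U, a u ∈ SO3)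
    (hclosed : ∀ i : Fin 3, i = 1 ∨ i = 2 → ∀ j k : Fin 3, ∀ u ∈ U,
      pd j (fun v => Wmat a x v i k) u = pd k (fun v => Wmat a x v i j) u) :
    ∀ u ∈ U,
      Wmat a x u 0 0 *
          (pd 1 (fun v => Wmat a x v 0 2) u - pd 2 (fun v => Wmat a x v 0 1) u)
        + Wmat a x u 0 1 *
          (pd 2 (fun v => Wmat a x v 0 0) u - pd 0 (fun v => Wmat a x v 0 2) u)
        + Wmat a x u 0 2 *
          (pd 0 (fun v => Wmat a x v 0 1) u - pd 1 (fun v => Wmat a x v 0 0) u)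
        = 0 := by
  -- invertibility of Wmat on U
  have hdet : ∀ v ∈ U, IsUnit (Wmat a x v).det := by
    intro v hv
    have hinv : (a v)⁻¹ = (a v)ᵀ := Matrix.inv_eq_left_inv (haSO v hv).1
    have : (Wmat a x v).det = (jacobian x v).det := by
      rw [Wmat, Matrix.det_mul, hinv, Matrix.det_transpose, (haSO v hv).2, one_mul]
    rw [this]
    exact hjac v hv
  -- the pointwise A/B constraints, in scalar form
  have hABv : ∀ v ∈ U, (∀ j k : Fin 3,
        -(Th a j v 0 1) * Wmat a x v 0 k + Th a j v 1 2 * Wmat a x v 2 k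
          = -(Th a k v 0 1) * Wmat a x v 0 j + Th a k v 1 2 * Wmat a x v 2 j) ∧
      (∀ j k : Fin 3,
        -(Th a j v 0 2) * Wmat a x v 0 k - Th a j v 1 2 * Wmat a x v 1 k
          = -(Th a k v 0 2) * Wmat a x v 0 j - Th a k v 1 2 * Wmat a x v 1 j) := by
    intro v hv
    have hsk : ∀ p i j : Fin 3, Th a p v j i = -(Th a p v i j) :=
      fun p i j => Th_skew hU ha haSO hv p i j
    constructor
    · intro j k
      have h0 : pd k (fun w => Wmat a x w 1 j) v - pd j (fun w => Wmat a x w 1 k) v = 0 := by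
        rw [hclosed 1 (Or.inl rfl) j k v hv]; ring
      have hmul := structure_eq hU hx ha haSO hv 1 j k
      rw [h0] at hmul
      have hmul' : (0:ℝ) = (∑ p, Th a j v 1 p * Wmat a x v p k)
          - ∑ p, Th a k v 1 p * Wmat a x v p j := by
        rw [← Matrix.mul_apply, ← Matrix.mul_apply]; exact hmul
      simp only [Fin.sum_univ_three] at hmul'
      linear_combination -hmul' - Wmat a x v 0 k * hsk j 0 1 - (Wmat a x v 1 k / 2) * hsk j 1 1
        + Wmat a x v 0 j * hsk k 0 1 + (Wmat a x v 1 j / 2) * hsk k 1 1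
    · intro j k
      have h0 : pd k (fun w => Wmat a x w 2 j) v - pd j (fun w => Wmat a x w 2 k) v = 0 := by
        rw [hclosed 2 (Or.inr rfl) j k v hv]; ring
      have hmul := structure_eq hU hx ha haSO hv 2 j k
      rw [h0] at hmul
      have hmul' : (0:ℝ) = (∑ p, Th a j v 2 p * Wmat a x v p k)
          - ∑ p, Th a k v 2 p * Wmat a x v p j := by
        rw [← Matrix.mul_apply, ← Matrix.mul_apply]; exact hmul
      simp only [Fin.sum_univ_three] at hmul'
      linear_combination -hmul' - Wmat a x v 0 k * hsk j 0 2 - Wmat a x v 1 k * hsk j 1 2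
        - (Wmat a x v 2 k / 2) * hsk j 2 2
        + Wmat a x v 0 j * hsk k 0 2 + Wmat a x v 1 j * hsk k 1 2
        + (Wmat a x v 2 j / 2) * hsk k 2 2
  -- pointwise proportionality r ∥ W row 0
  have hrW : ∀ v ∈ U, ∀ l m : Fin 3,
      Th a l v 1 2 * Wmat a x v 0 m = Th a m v 1 2 * Wmat a x v 0 l := by
    intro v hv
    exact alg1 (Wmat a x v) (Wmat a x v)⁻¹ (fun l => Th a l v 0 1) (fun l => Th a l v 0 2)
      (fun l => Th a l v 1 2)
      (Matrix.mul_nonsing_inv _ (hdet v hv)) (Matrix.nonsing_inv_mul _ (hdet v hv))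
      (hABv v hv).1 (hABv v hv).2
  intro u hu
  -- differentiated proportionality
  have hstar : ∀ p l m : Fin 3,
      pd p (fun v => Th a l v 1 2) u * Wmat a x u 0 m
        + Th a l u 1 2 * pd p (fun v => Wmat a x v 0 m) u
      = pd p (fun v => Th a m v 1 2) u * Wmat a x u 0 l
        + Th a m u 1 2 * pd p (fun v => Wmat a x v 0 l) u := by
    intro p l m
    have hdl : DifferentiableAt ℝ (fun v => Th a l v 1 2) u :=
      diffAt_of_cdOn hU (Th_cd hU ha l 1 2) hu
    have hdm : DifferentiableAt ℝ (fun v => Th a m v 1 2) u :=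
      diffAt_of_cdOn hU (Th_cd hU ha m 1 2) hu
    have hdwm : DifferentiableAt ℝ (fun v => Wmat a x v 0 m) u :=
      diffAt_of_cdOn hU (Wf_cd hU hx ha haSO 0 m) hu
    have hdwl : DifferentiableAt ℝ (fun v => Wmat a x v 0 l) u :=
      diffAt_of_cdOn hU (Wf_cd hU hx ha haSO 0 l) hu
    have heq : pd p (fun v => Th a l v 1 2 * Wmat a x v 0 m) u
        = pd p (fun v => Th a m v 1 2 * Wmat a x v 0 l) u :=
      pd_congr hU (fun v hv => hrW v hv l m) hu p
    rw [pd_mul hdl hdwm, pd_mul hdm hdwl] at heq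
    exact heq
  -- structure equations for the first row, scalar form
  have hsk : ∀ p i j : Fin 3, Th a p u j i = -(Th a p u i j) :=
    fun p i j => Th_skew hU ha haSO hu p i j
  have hE2 : ∀ j k : Fin 3,
      pd k (fun v => Wmat a x v 0 j) u - pd j (fun v => Wmat a x v 0 k) u
        = Th a j u 0 1 * Wmat a x u 1 k + Th a j u 0 2 * Wmat a x u 2 k
          - (Th a k u 0 1 * Wmat a x u 1 j + Th a k u 0 2 * Wmat a x u 2 j) := by
    intro j k
    have hmul := structure_eq hU hx ha haSO hu 0 j k
    have hmul' : pd k (fun w => Wmat a x w 0 j) u - pd j (fun w => Wmat a x w 0 k) u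
        = (∑ p, Th a j u 0 p * Wmat a x u p k) - ∑ p, Th a k u 0 p * Wmat a x u p j := by
      rw [← Matrix.mul_apply, ← Matrix.mul_apply]; exact hmul
    simp only [Fin.sum_univ_three] at hmul'
    linear_combination hmul' + (Wmat a x u 0 k / 2) * hsk j 0 0 - (Wmat a x u 0 j / 2) * hsk k 0 0
  -- curvature
  have hcurv : ∀ l m : Fin 3,
      pd l (fun v => Th a m v 1 2) u - pd m (fun v => Th a l v 1 2) u
        = Th a l u 0 1 * Th a m u 0 2 - Th a m u 0 1 * Th a l u 0 2 :=
    fun l m => curv hU ha haSO hu l m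
  exact alg2 (Wmat a x u) (Wmat a x u)⁻¹ (fun l => Th a l u 0 1) (fun l => Th a l u 0 2)
    (fun l => Th a l u 1 2) (fun p m => pd p (fun v => Wmat a x v 0 m) u)
    (fun p l => pd p (fun v => Th a l v 1 2) u)
    (Matrix.mul_nonsing_inv _ (hdet u hu)) (Matrix.nonsing_inv_mul _ (hdet u hu))
    (hABv u hu).1 (hABv u hu).2 (fun j k => hE2 j k) (fun p l m => hstar p l m)
    (fun l m => hcurv l m)
end

section
/- Let V ⊆ ℝ³ be an open neighborhood of the origin and let b = (b₁, b₂, b₃) : V → ℝ³ be a continuous map satisfying u¹·b₁(u) + u²·b₂(u) − 2u³·b₃(u) = 0 for all u = (u¹,u²,u³) ∈ V. Then b(0) = 0. (Equivalently: the 2-form Υ = u¹ du²∧du³ + u² du³∧du¹ − 2u³ du¹∧du² admits no factorization Υ ∧ β = 0 with a 1-form β that is nonvanishing at the origin.) -/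
open Matrix

lemma single_cont (i : Fin 3) : Continuous (fun t : ℝ => (Pi.single i t : Fin 3 → ℝ)) := by
  apply continuous_pi
  intro j
  simp only [Pi.single_apply]
  split <;> continuity

lemma aux_limit (V : Set (Fin 3 → ℝ)) (hV : IsOpen V) (h0 : (0 : Fin 3 → ℝ) ∈ V)
    (b : (Fin 3 → ℝ) → (Fin 3 → ℝ)) (hb : ContinuousOn b V) (i : Fin 3)
    (key : ∀ t : ℝ, (Pi.single i t : Fin 3 → ℝ) ∈ V → t ≠ 0 → b (Pi.single i t) i = 0) :
    b 0 i = 0 := by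
  have hg : Continuous (fun t : ℝ => (Pi.single i t : Fin 3 → ℝ)) := single_cont i
  have hpre : (fun t : ℝ => (Pi.single i t : Fin 3 → ℝ)) ⁻¹' V ∈ nhds (0 : ℝ) := by
    apply hg.continuousAt.preimage_mem_nhds
    simpa using hV.mem_nhds h0
  have h1 : Filter.Tendsto (fun t : ℝ => b (Pi.single i t) i)
      (nhdsWithin 0 {(0:ℝ)}ᶜ) (nhds (b 0 i)) := by
    have hbc : ContinuousAt b 0 := hb.continuousAt (hV.mem_nhds h0)
    have : ContinuousAt (fun t : ℝ => b (Pi.single i t) i) 0 := by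
      have h' : ContinuousAt (fun t : ℝ => b (Pi.single i t)) 0 :=
        ContinuousAt.comp (by simpa using hbc) hg.continuousAt
      exact (continuous_apply i).continuousAt.comp h'
    simpa using this.continuousWithinAt.tendsto
  have h2 : Filter.Tendsto (fun t : ℝ => b (Pi.single i t) i)
      (nhdsWithin 0 {(0:ℝ)}ᶜ) (nhds 0) := by
    apply Filter.Tendsto.congr' _ tendsto_const_nhds
    filter_upwards [nhdsWithin_le_nhds hpre, self_mem_nhdsWithin] with t ht ht'
    exact (key t ht ht').symm
  exact tendsto_nhds_unique h1 h2

/-- any continuous `b` with `u¹b₁ + u²b₂ - 2u³b₃ = 0` near the origin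
vanishes at the origin (the factorization obstruction of Example 4.1 of the paper). -/
theorem upsilon_no_nonvanishing_factor
    (V : Set (Fin 3 → ℝ)) (hV : IsOpen V) (h0 : (0 : Fin 3 → ℝ) ∈ V)
    (b : (Fin 3 → ℝ) → (Fin 3 → ℝ)) (hb : ContinuousOn b V)
    (heq : ∀ u ∈ V, u 0 * b u 0 + u 1 * b u 1 - 2 * u 2 * b u 2 = 0) :
    b 0 = 0 := by
  funext i
  have : ∀ i : Fin 3, b 0 i = 0 := by
    intro i
    apply aux_limit V hV h0 b hb i
    intro t ht ht'
    have := heq _ ht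
    fin_cases i <;> simp [Pi.single_apply] at this ⊢ <;>
      rcases this with h | h <;> first | exact h | exact absurd h ht'
  simp [this i]
end

section
/- Let J ⊆ ℝ be an open interval and g₂, g₃ : J → ℝ smooth functions. Let U ⊆ J × ℝ² be a connected, simply connected open set on which f(u) := 1 + g₂(u¹)u² + g₃(u¹)u³ is nonvanishing. Then the coframing ω = (f du¹, du², du³) has flat associated metric: there exist a smooth map x : U → ℝ³ with Dx(u) invertible for all u ∈ U and a smooth map a : U → SO(3) such that a(u)⁻¹ · Dx(u) = diag(f(u), 1, 1) for all u ∈ U. -/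
open Matrix

section AuxiliaryODE
open Set Matrix
open scoped ContDiff
attribute [local instance] Matrix.linftyOpNormedRing Matrix.linftyOpNormedAlgebra
noncomputable section
abbrev E3 := Matrix (Fin 3) (Fin 3) ℝ

def entryCLM (i j : Fin 3) : E3 →L[ℝ] ℝ :=
  LinearMap.toContinuousLinearMap
    { toFun := fun M => M i j
      map_add' := fun _ _ => rfl
      map_smul' := fun _ _ => rfl }

def tCLM : E3 →L[ℝ] E3 :=
  LinearMap.toContinuousLinearMap ((Matrix.transposeLinearEquiv (Fin 3) (Fin 3) ℝ ℝ).toLinearMap)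

@[simp] lemma tCLM_apply (M : E3) : tCLM M = Mᵀ := rfl
@[simp] lemma entryCLM_apply (i j : Fin 3) (M : E3) : entryCLM i j M = M i j := rfl

lemma norm_le_three (A : E3) (h : A * Aᵀ = 1) : ‖A‖ ≤ 3 := by
  have hrow : ∀ i j, ‖A i j‖₊ ≤ 1 := by
    intro i j
    have h1 : ∑ k, A i k * A i k = 1 := by
      simpa [Matrix.mul_apply, Matrix.transpose_apply] using congrFun (congrFun h i) i
    have h2 : A i j * A i j ≤ 1 :=
      h1 ▸ Finset.single_le_sum (f := fun k => A i k * A i k)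
        (fun k _ => mul_self_nonneg _) (Finset.mem_univ j)
    have h3 : |A i j| ≤ 1 := abs_le_one_iff_mul_self_le_one.mpr h2
    rw [← NNReal.coe_le_coe]
    simpa [Real.norm_eq_abs] using h3
  have : ((3:ℝ)) = ((3 : NNReal) : ℝ) := by norm_num
  rw [Matrix.linfty_opNorm_def, this, NNReal.coe_le_coe]
  refine Finset.sup_le fun i _ => ?_
  calc ∑ j, ‖A i j‖₊ ≤ ∑ _j : Fin 3, 1 := Finset.sum_le_sum fun j _ => hrow i j
    _ = 3 := by simp

section ODE

lemma hasDerivWithinAt_of_nmem_closure' {F : Type*} [NormedAddCommGroup F] [NormedSpace ℝ F]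
    {f : ℝ → F} {f' : F} {s : Set ℝ} {x : ℝ} (h : x ∉ closure s) : HasDerivWithinAt f f' s x :=
  hasDerivWithinAt_iff_hasFDerivWithinAt.mpr (HasFDerivWithinAt.of_notMem_closure h)

variable {S : ℝ → E3}

lemma sol_mul_transpose (hskew : ∀ t, (S t)ᵀ = -S t) {a b : ℝ} {α : ℝ → E3}
    (hα : ∀ s ∈ Icc a b, HasDerivWithinAt α (α s * S s) (Icc a b) s) :
    ∀ s ∈ Icc a b, α s * (α s)ᵀ = α a * (α a)ᵀ := by
  rcases le_or_gt a b with hab | hab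
  · have hcontα : ContinuousOn α (Icc a b) := fun s hs => (hα s hs).continuousWithinAt
    have hg : ∀ s ∈ Icc a b, HasDerivWithinAt (fun τ => α τ * (α τ)ᵀ) 0 (Icc a b) s := by
      intro s hs
      have h1 := hα s hs
      have h2 : HasDerivWithinAt (fun τ => (α τ)ᵀ) ((α s * S s)ᵀ) (Icc a b) s := by
        have h := (tCLM.hasFDerivAt).comp_hasDerivWithinAt s h1
        exact h
      have h3 := h1.mul h2
      refine h3.congr_deriv ?_
      rw [Matrix.transpose_mul, hskew]
      noncomm_ring
    intro s hs
    exact constant_of_has_deriv_right_zero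
      (fun τ hτ => ((hα τ hτ).continuousWithinAt).mul
        ((tCLM.continuous.comp_continuousOn hcontα) τ hτ))
      (fun τ hτ => (hg τ (Ico_subset_Icc_self hτ)).mono_of_mem_nhdsWithin
        (Filter.mem_of_superset (Icc_mem_nhdsGE_of_mem ⟨le_rfl, hτ.2⟩)
          (Icc_subset_Icc_left hτ.1))) s hs
  · intro s hs
    rw [Icc_eq_empty (not_le.mpr hab)] at hs
    exact absurd hs (notMem_empty s)

/-- Glue two solutions at a common point. -/
lemma glue_sol {a m b : ℝ} (ham : a ≤ m) (hmb : m ≤ b) {α β : ℝ → E3}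
    (hjoin : α m = β m)
    (hα : ∀ s ∈ Icc a m, HasDerivWithinAt α (α s * S s) (Icc a m) s)
    (hβ : ∀ s ∈ Icc m b, HasDerivWithinAt β (β s * S s) (Icc m b) s) :
    ∃ γ : ℝ → E3, EqOn γ α (Icc a m) ∧ EqOn γ β (Icc m b) ∧
      ∀ s ∈ Icc a b, HasDerivWithinAt γ (γ s * S s) (Icc a b) s := by
  classical
  refine ⟨fun s => if s ≤ m then α s else β s, ?_, ?_, ?_⟩
  · intro s hs; simp [hs.2]
  · intro s hs
    rcases eq_or_lt_of_le hs.1 with h | h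
    · simp [← h, hjoin]
    · simp [not_le.mpr h]
  · intro s hs
    set γ : ℝ → E3 := fun s => if s ≤ m then α s else β s with hγdef
    have hγα : EqOn γ α (Icc a m) := fun τ hτ => by simp [γ, hτ.2]
    have hγβ : EqOn γ β (Icc m b) := fun τ hτ => by
      rcases eq_or_lt_of_le hτ.1 with h | h
      · simp [γ, ← h, hjoin]
      · simp [γ, not_le.mpr h]
    have key1 : HasDerivWithinAt γ (γ s * S s) (Icc a m) s := by
      by_cases hsm : s ∈ Icc a m
      · exact ((hα s hsm).congr hγα (hγα hsm)).congr_deriv (by rw [hγα hsm])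
      · exact hasDerivWithinAt_of_nmem_closure' (by rwa [closure_Icc] )
    have key2 : HasDerivWithinAt γ (γ s * S s) (Icc m b) s := by
      by_cases hsm : s ∈ Icc m b
      · exact ((hβ s hsm).congr hγβ (hγβ hsm)).congr_deriv (by rw [hγβ hsm])
      · exact hasDerivWithinAt_of_nmem_closure' (by rwa [closure_Icc])
    have := key1.union key2
    rwa [Icc_union_Icc_eq_Icc ham hmb] at this

end ODE

lemma hasDerivWithinAt_singleton' {F : Type*} [NormedAddCommGroup F] [NormedSpace ℝ F]
    (f : ℝ → F) (x : ℝ) (f' : F) : HasDerivWithinAt f f' {x} x := by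
  rw [hasDerivWithinAt_iff_hasFDerivWithinAt]
  simp only [HasFDerivWithinAt, nhdsWithin_singleton, hasFDerivAtFilter_iff_isLittleO,
    Filter.prod_pure_pure, Asymptotics.isLittleO_pure, sub_self, map_zero]

variable {S : ℝ → E3}

lemma exist_forward {J : Set ℝ} (hJc : J.OrdConnected) {t₀ b : ℝ}
    (ht₀ : t₀ ∈ J) (hb : b ∈ J) (htb : t₀ ≤ b)
    (hS : ContinuousOn S J) (hskew : ∀ t, (S t)ᵀ = -S t) :
    ∃ α : ℝ → E3, α t₀ = 1 ∧
      ∀ s ∈ Icc t₀ b, HasDerivWithinAt α (α s * S s) (Icc t₀ b) s := by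
  have hIccJ : Icc t₀ b ⊆ J := hJc.out ht₀ hb
  obtain ⟨C₀, hC₀⟩ := (isCompact_Icc).exists_bound_of_continuousOn (hS.mono hIccJ)
  set C₁ : ℝ := max C₀ 0 + 1 with hC₁def
  have hC₁pos : (0:ℝ) < C₁ := by positivity
  have hSb : ∀ x ∈ Icc t₀ b, ‖S x‖ ≤ C₁ := fun x hx =>
    (hC₀ x hx).trans (by simp only [hC₁def]; linarith [le_max_left C₀ 0])
  set ε : ℝ := 1 / (5 * C₁) with hεdef
  have hε : 0 < ε := by positivity
  set P : ℝ → Prop := fun t => t ∈ Icc t₀ b ∧ ∃ α : ℝ → E3, α t₀ = 1 ∧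
    ∀ s ∈ Icc t₀ t, HasDerivWithinAt α (α s * S s) (Icc t₀ t) s with hPdef
  have hbase : P t₀ := by
    refine ⟨⟨le_refl _, htb⟩, fun _ => 1, rfl, ?_⟩
    intro s hs
    rw [Icc_self] at hs ⊢
    rcases hs with rfl
    exact hasDerivWithinAt_singleton' _ _ _
  -- step
  have hstep : ∀ t, P t → t < b → P (min (t + ε) b) := by
    rintro t ⟨htmem, α, hα0, hαsol⟩ htb'
    set t'' : ℝ := min (t + ε) b with ht''def
    have htt'' : t ≤ t'' := le_min (by linarith) htmem.2
    have ht''b : t'' ≤ b := min_le_right _ _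
    have ht''mem : t'' ∈ Icc t₀ b := ⟨le_trans htmem.1 htt'', ht''b⟩
    -- orthogonality at t
    have horth : α t * (α t)ᵀ = 1 := by
      have := sol_mul_transpose hskew hαsol t ⟨htmem.1, le_refl t⟩
      rw [hα0] at this
      simpa using this
    have hnorm : ‖α t‖ ≤ 3 := norm_le_three _ horth
    -- Picard-Lindelöf on [t, t'']
    have hpl : IsPicardLindelof (fun s y => y * S s) (tmin := t) (tmax := t'')
        ⟨t, le_refl t, htt''⟩ (α t) 1 0 ⟨4 * C₁, by positivity⟩ ⟨C₁, hC₁pos.le⟩ := by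
      refine ⟨?_, ?_, ?_, ?_⟩
      · intro s hs
        have hsmem : s ∈ Icc t₀ b := ⟨le_trans htmem.1 hs.1, le_trans hs.2 ht''b⟩
        refine LipschitzOnWith.of_dist_le_mul fun y _ z _ => ?_
        rw [dist_eq_norm, dist_eq_norm, ← sub_mul]
        calc ‖(y - z) * S s‖ ≤ ‖y - z‖ * ‖S s‖ := norm_mul_le _ _
          _ ≤ ‖y - z‖ * C₁ := by
              exact mul_le_mul_of_nonneg_left (hSb s hsmem) (norm_nonneg _)
          _ = C₁ * ‖y - z‖ := mul_comm _ _
      · intro y _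
        exact (continuousOn_const.mul (hS.mono (fun s hs =>
          hIccJ ⟨le_trans htmem.1 hs.1, le_trans hs.2 ht''b⟩)))
      · intro s hs y hy
        have hsmem : s ∈ Icc t₀ b := ⟨le_trans htmem.1 hs.1, le_trans hs.2 ht''b⟩
        have hybound : ‖y‖ ≤ 4 := by
          have := (mem_closedBall_iff_norm.mp hy).trans_eq NNReal.coe_one
          calc ‖y‖ = ‖(y - α t) + α t‖ := by rw [sub_add_cancel]
            _ ≤ ‖y - α t‖ + ‖α t‖ := norm_add_le _ _
            _ ≤ 1 + 3 := add_le_add this hnorm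
            _ = 4 := by norm_num
        calc ‖y * S s‖ ≤ ‖y‖ * ‖S s‖ := norm_mul_le _ _
          _ ≤ 4 * C₁ := mul_le_mul hybound (hSb s hsmem) (norm_nonneg _) (by norm_num)
      · have h1 : max (t'' - t) (t - t) ≤ ε := by
          refine max_le ?_ (by linarith)
          have : t'' ≤ t + ε := min_le_left _ _
          linarith
        rw [NNReal.coe_one, NNReal.coe_zero, sub_zero]
        calc 4 * C₁ * max (t'' - t) (t - t) ≤ 4 * C₁ * ε :=
              mul_le_mul_of_nonneg_left h1 (by positivity)
          _ = 4 / 5 := by rw [hεdef]; field_simp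
          _ ≤ 1 := by norm_num
    obtain ⟨β, hβ0, hβsol⟩ := hpl.exists_eq_forall_mem_Icc_hasDerivWithinAt₀
    obtain ⟨γ, hγα, hγβ, hγsol⟩ := glue_sol (S := S) htmem.1 htt'' hβ0.symm hαsol hβsol
    exact ⟨ht''mem, γ, by rw [hγα ⟨le_refl _, htmem.1⟩, hα0], hγsol⟩
  -- induction
  have hind : ∀ n : ℕ, P (min (t₀ + n * ε) b) := by
    intro n
    induction n with
    | zero => simpa [min_eq_left htb] using hbase
    | succ n ih =>
      rcases le_or_gt b (t₀ + n * ε) with h | h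
      · have h2 : min (t₀ + ((n:ℝ)+1) * ε) b = b := min_eq_right (by nlinarith)
        have h1 : min (t₀ + n * ε) b = b := min_eq_right h
        push_cast
        rw [h2, ← h1]; exact ih
      · have h1 : min (t₀ + n * ε) b = t₀ + n * ε := min_eq_left h.le
        rw [h1] at ih
        have h3 := hstep _ ih h
        have h2 : min (t₀ + n * ε + ε) b = min (t₀ + ((n:ℝ)+1) * ε) b := by
          ring_nf
        push_cast
        rwa [h2] at h3
  obtain ⟨n, hn⟩ := exists_nat_ge ((b - t₀) / ε)
  have : min (t₀ + n * ε) b = b := by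
    refine min_eq_right ?_
    rw [div_le_iff₀ hε] at hn
    linarith
  have hfin := hind n
  rw [this] at hfin
  exact hfin.2

lemma exist_backward {J : Set ℝ} (hJc : J.OrdConnected) {t₀ a : ℝ}
    (ht₀ : t₀ ∈ J) (ha : a ∈ J) (hat : a ≤ t₀)
    (hS : ContinuousOn S J) (hskew : ∀ t, (S t)ᵀ = -S t) :
    ∃ α : ℝ → E3, α t₀ = 1 ∧
      ∀ s ∈ Icc a t₀, HasDerivWithinAt α (α s * S s) (Icc a t₀) s := by
  set φ : ℝ → ℝ := fun t => 2 * t₀ - t with hφdef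
  set J' : Set ℝ := φ ⁻¹' J with hJ'def
  set S' : ℝ → E3 := fun t => -S (φ t) with hS'def
  have hJc' : J'.OrdConnected := by
    constructor
    intro x hx y hy z hz
    have : φ z ∈ Icc (φ y) (φ x) := ⟨by simp [hφdef]; linarith [hz.2], by simp [hφdef]; linarith [hz.1]⟩
    exact hJc.out hy hx this
  have hφcont : Continuous φ := by fun_prop
  have hS' : ContinuousOn S' J' := (hS.comp hφcont.continuousOn fun x hx => hx).neg
  have hskew' : ∀ t, (S' t)ᵀ = -S' t := by
    intro t; simp [hS'def, Matrix.transpose_neg, hskew]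
  have ht₀' : t₀ ∈ J' := by
    simp only [hJ'def, mem_preimage, hφdef]
    have h : 2 * t₀ - t₀ = t₀ := by ring
    rw [h]; exact ht₀
  have hb' : 2 * t₀ - a ∈ J' := by
    simp only [hJ'def, mem_preimage, hφdef]
    have h : 2 * t₀ - (2 * t₀ - a) = a := by ring
    rw [h]; exact ha
  obtain ⟨α', hα'0, hα'sol⟩ := exist_forward hJc' ht₀' hb' (by linarith) hS' hskew'
  have hφt₀ : φ t₀ = t₀ := by simp only [hφdef]; ring
  refine ⟨fun t => α' (φ t), by show α' (φ t₀) = 1; rw [hφt₀]; exact hα'0, ?_⟩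
  intro s hs
  have hσ : φ s ∈ Icc t₀ (2 * t₀ - a) := ⟨by simp [hφdef]; linarith [hs.2], by simp [hφdef]; linarith [hs.1]⟩
  have hφd : HasDerivWithinAt φ (-1 : ℝ) (Icc a t₀) s := by
    have h := ((hasDerivAt_const s (2*t₀)).sub (hasDerivAt_id' s)).hasDerivWithinAt (s := Icc a t₀)
    rw [zero_sub] at h; exact h
  have hmaps : MapsTo φ (Icc a t₀) (Icc t₀ (2 * t₀ - a)) := by
    intro τ hτ; exact ⟨by simp [hφdef]; linarith [hτ.2], by simp [hφdef]; linarith [hτ.1]⟩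
  have := (hα'sol (φ s) hσ).scomp s hφd hmaps
  have hval : φ (φ s) = s := by simp only [hφdef]; ring
  simp [hS'def, hval, Function.comp_def] at this
  exact this

lemma exist_Icc {J : Set ℝ} (hJc : J.OrdConnected) {t₀ a b : ℝ}
    (ht₀ : t₀ ∈ J) (ha : a ∈ J) (hb : b ∈ J) (hat : a ≤ t₀) (htb : t₀ ≤ b)
    (hS : ContinuousOn S J) (hskew : ∀ t, (S t)ᵀ = -S t) :
    ∃ α : ℝ → E3, α t₀ = 1 ∧
      ∀ s ∈ Icc a b, HasDerivWithinAt α (α s * S s) (Icc a b) s := by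
  obtain ⟨β, hβ0, hβsol⟩ := exist_backward hJc ht₀ ha hat hS hskew
  obtain ⟨δ, hδ0, hδsol⟩ := exist_forward hJc ht₀ hb htb hS hskew
  obtain ⟨γ, hγβ, hγδ, hγsol⟩ := glue_sol (S := S) hat htb (hβ0.trans hδ0.symm) hβsol hδsol
  exact ⟨γ, by rw [hγβ ⟨hat, le_refl _⟩, hβ0], hγsol⟩

lemma sol_unique_uIcc {J : Set ℝ} (hJc : J.OrdConnected) (hS : ContinuousOn S J)
    {t₀ m : ℝ} (ht₀ : t₀ ∈ J) (hm : m ∈ J) {α β : ℝ → E3}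
    (hα : ∀ s ∈ uIcc t₀ m, HasDerivWithinAt α (α s * S s) (uIcc t₀ m) s)
    (hβ : ∀ s ∈ uIcc t₀ m, HasDerivWithinAt β (β s * S s) (uIcc t₀ m) s)
    (hinit : α t₀ = β t₀) : EqOn α β (uIcc t₀ m) := by
  have huJ : uIcc t₀ m ⊆ J := by
    rcases le_total t₀ m with h | h
    · rw [uIcc_of_le h]; exact hJc.out ht₀ hm
    · rw [uIcc_of_ge h]; exact hJc.out hm ht₀
  obtain ⟨C₀, hC₀⟩ := (isCompact_uIcc).exists_bound_of_continuousOn (hS.mono huJ)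
  set C₁ : ℝ := max C₀ 0 + 1 with hC₁def
  have hC₁pos : (0:ℝ) < C₁ := by positivity
  have hSb : ∀ x ∈ uIcc t₀ m, ‖S x‖ ≤ C₁ := fun x hx =>
    (hC₀ x hx).trans (by simp only [hC₁def]; linarith [le_max_left C₀ 0])
  classical
  set sets : ℝ → Set E3 := fun t => if t ∈ uIcc t₀ m then (univ : Set E3) else ∅ with hsets
  have hv : ∀ t, LipschitzOnWith C₁.toNNReal (fun y : E3 => y * S t) (sets t) := by
    intro t
    by_cases ht : t ∈ uIcc t₀ m
    · rw [hsets]; simp only [ht, if_true]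
      rw [lipschitzOnWith_univ]  -- may not exist; fallback below
      refine LipschitzWith.of_dist_le_mul fun y z => ?_
      rw [dist_eq_norm, dist_eq_norm, ← sub_mul]
      calc ‖(y - z) * S t‖ ≤ ‖y - z‖ * ‖S t‖ := norm_mul_le _ _
        _ ≤ ‖y - z‖ * C₁ := mul_le_mul_of_nonneg_left (hSb t ht) (norm_nonneg _)
        _ = C₁.toNNReal * ‖y - z‖ := by
            rw [Real.coe_toNNReal _ hC₁pos.le]; ring
    · rw [hsets]; simp only [ht, if_false]
      exact lipschitzOnWith_empty _ _
  have hcontα : ContinuousOn α (uIcc t₀ m) := fun s hs => (hα s hs).continuousWithinAt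
  have hcontβ : ContinuousOn β (uIcc t₀ m) := fun s hs => (hβ s hs).continuousWithinAt
  rcases le_total t₀ m with h | h
  · rw [uIcc_of_le h] at *
    refine ODE_solution_unique_of_mem_Icc_right (fun t _ => hv t) hcontα ?_ ?_ hcontβ ?_ ?_ hinit
    · intro t ht
      exact (hα t (Ico_subset_Icc_self ht)).mono_of_mem_nhdsWithin
        (Filter.mem_of_superset (Icc_mem_nhdsGE_of_mem ⟨le_rfl, ht.2⟩)
          (Icc_subset_Icc_left ht.1))
    · intro t ht; simp only [hsets]; rw [if_pos]; exacts [mem_univ _, ⟨ht.1, ht.2.le⟩]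
    · intro t ht
      exact (hβ t (Ico_subset_Icc_self ht)).mono_of_mem_nhdsWithin
        (Filter.mem_of_superset (Icc_mem_nhdsGE_of_mem ⟨le_rfl, ht.2⟩)
          (Icc_subset_Icc_left ht.1))
    · intro t ht; simp only [hsets]; rw [if_pos]; exacts [mem_univ _, ⟨ht.1, ht.2.le⟩]
  · rw [uIcc_of_ge h] at *
    refine ODE_solution_unique_of_mem_Icc_left (fun t _ => hv t) hcontα ?_ ?_ hcontβ ?_ ?_ hinit
    · intro t ht
      exact (hα t (Ioc_subset_Icc_self ht)).mono_of_mem_nhdsWithin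
        (Filter.mem_of_superset (Icc_mem_nhdsLE_of_mem ⟨ht.1, le_rfl⟩)
          (Icc_subset_Icc_right ht.2))
    · intro t ht; simp only [hsets]; rw [if_pos]; exacts [mem_univ _, ⟨ht.1.le, ht.2⟩]
    · intro t ht
      exact (hβ t (Ioc_subset_Icc_self ht)).mono_of_mem_nhdsWithin
        (Filter.mem_of_superset (Icc_mem_nhdsLE_of_mem ⟨ht.1, le_rfl⟩)
          (Icc_subset_Icc_right ht.2))
    · intro t ht; simp only [hsets]; rw [if_pos]; exacts [mem_univ _, ⟨ht.1.le, ht.2⟩]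

lemma exist_uIcc {J : Set ℝ} (hJc : J.OrdConnected) {t₀ m : ℝ}
    (ht₀ : t₀ ∈ J) (hm : m ∈ J)
    (hS : ContinuousOn S J) (hskew : ∀ t, (S t)ᵀ = -S t) :
    ∃ α : ℝ → E3, α t₀ = 1 ∧
      ∀ s ∈ uIcc t₀ m, HasDerivWithinAt α (α s * S s) (uIcc t₀ m) s := by
  rcases le_total t₀ m with h | h
  · rw [uIcc_of_le h]
    exact exist_Icc hJc ht₀ ht₀ hm (le_refl _) h hS hskew
  · rw [uIcc_of_ge h]
    exact exist_Icc hJc ht₀ hm ht₀ h (le_refl _) hS hskew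

lemma global_sol {J : Set ℝ} (hJ : IsOpen J) (hJc : J.OrdConnected) {t₀ : ℝ}
    (ht₀ : t₀ ∈ J) (hS : ContinuousOn S J) (hskew : ∀ t, (S t)ᵀ = -S t) :
    ∃ A : ℝ → E3, A t₀ = 1 ∧ (∀ t ∈ J, HasDerivAt A (A t * S t) t) ∧
      (∀ t ∈ J, A t * (A t)ᵀ = 1) := by
  classical
  have hex : ∀ m, m ∈ J → ∃ α : ℝ → E3, α t₀ = 1 ∧
      ∀ s ∈ uIcc t₀ m, HasDerivWithinAt α (α s * S s) (uIcc t₀ m) s :=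
    fun m hm => exist_uIcc hJc ht₀ hm hS hskew
  choose sol hsol0 hsolD using hex
  set A : ℝ → E3 := fun t => if ht : t ∈ J then sol t ht t else 1 with hAdef
  have huIccJ : ∀ {m}, m ∈ J → uIcc t₀ m ⊆ J := by
    intro m hm
    rcases le_total t₀ m with h | h
    · rw [uIcc_of_le h]; exact hJc.out ht₀ hm
    · rw [uIcc_of_ge h]; exact hJc.out hm ht₀
  have hagree : ∀ m (hm : m ∈ J), ∀ s ∈ uIcc t₀ m, A s = sol m hm s := by
    intro m hm s hs
    have hsJ : s ∈ J := huIccJ hm hs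
    have hsub : uIcc t₀ s ⊆ uIcc t₀ m := uIcc_subset_uIcc left_mem_uIcc hs
    have h1 : EqOn (sol s hsJ) (sol m hm) (uIcc t₀ s) := by
      refine sol_unique_uIcc hJc hS ht₀ hsJ (hsolD s hsJ) ?_
        ((hsol0 s hsJ).trans (hsol0 m hm).symm)
      intro τ hτ
      exact (hsolD m hm τ (hsub hτ)).mono hsub
    have : A s = sol s hsJ s := by rw [hAdef]; simp [hsJ]
    rw [this, h1 right_mem_uIcc]
  have hA0 : A t₀ = 1 := by rw [hAdef]; simp [ht₀, hsol0]
  have hAderiv : ∀ t ∈ J, HasDerivAt A (A t * S t) t := by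
    intro t ht
    obtain ⟨ε, hε, hball⟩ := Metric.isOpen_iff.mp hJ t ht
    rw [Real.ball_eq_Ioo] at hball
    set l : ℝ := t - ε / 2 with hldef
    set r : ℝ := t + ε / 2 with hrdef
    have hlJ : l ∈ J := hball ⟨by simp [hldef]; linarith, by simp [hldef]; linarith⟩
    have hrJ : r ∈ J := hball ⟨by simp [hrdef]; linarith, by simp [hrdef]; linarith⟩
    set m₁ : ℝ := min t₀ l with hm₁def
    set m₂ : ℝ := max t₀ r with hm₂def
    have hm₁J : m₁ ∈ J := by
      rcases min_cases t₀ l with ⟨h, _⟩ | ⟨h, _⟩ <;> rw [hm₁def, h]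
      exacts [ht₀, hlJ]
    have hm₂J : m₂ ∈ J := by
      rcases max_cases t₀ r with ⟨h, _⟩ | ⟨h, _⟩ <;> rw [hm₂def, h]
      exacts [ht₀, hrJ]
    obtain ⟨α, hα0, hαsol⟩ := exist_Icc hJc ht₀ hm₁J hm₂J (min_le_left _ _)
      (le_max_left _ _) hS hskew
    have hIccsub : Icc m₁ m₂ ⊆ J := hJc.out hm₁J hm₂J
    have hAα : ∀ s ∈ Icc m₁ m₂, A s = α s := by
      intro s hs
      have hsJ : s ∈ J := hIccsub hs
      have hsub : uIcc t₀ s ⊆ Icc m₁ m₂ := by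
        rw [uIcc]
        exact Icc_subset_Icc (le_min (min_le_left _ _) hs.1)
          (max_le (le_max_left _ _) hs.2)
      have h1 : EqOn (sol s hsJ) α (uIcc t₀ s) := by
        refine sol_unique_uIcc hJc hS ht₀ hsJ (hsolD s hsJ) ?_
          ((hsol0 s hsJ).trans hα0.symm)
        intro τ hτ
        exact (hαsol τ (hsub hτ)).mono hsub
      have h2 : A s = sol s hsJ s := by rw [hAdef]; simp [hsJ]
      rw [h2, h1 right_mem_uIcc]
    have htmem : t ∈ Ioo l r := ⟨by simp [hldef]; linarith, by simp [hrdef]; linarith⟩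
    have hIoosub : Ioo l r ⊆ Icc m₁ m₂ :=
      fun τ hτ => ⟨le_trans (min_le_right _ _) hτ.1.le, le_trans hτ.2.le (le_max_right _ _)⟩
    have hnhds : Icc m₁ m₂ ∈ nhds t :=
      Filter.mem_of_superset (Ioo_mem_nhds htmem.1 htmem.2) hIoosub
    have hαd : HasDerivAt α (α t * S t) t :=
      (hαsol t (hIoosub htmem)).hasDerivAt hnhds
    have hev : A =ᶠ[nhds t] α :=
      Filter.eventuallyEq_of_mem (Ioo_mem_nhds htmem.1 htmem.2)
        (fun τ hτ => hAα τ (hIoosub hτ))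
    have := hαd.congr_of_eventuallyEq hev
    rwa [← hAα t (hIoosub htmem)] at this
  refine ⟨A, hA0, hAderiv, ?_⟩
  intro t ht
  have hsub : uIcc t₀ t ⊆ J := huIccJ ht
  have hsol : ∀ s ∈ uIcc t₀ t, HasDerivWithinAt A (A s * S s) (uIcc t₀ t) s :=
    fun s hs => (hAderiv s (hsub hs)).hasDerivWithinAt
  rcases le_total t₀ t with h | h
  · rw [uIcc_of_le h] at hsol
    have := sol_mul_transpose hskew hsol t ⟨h, le_refl _⟩
    rw [hA0] at this
    simpa using this
  · rw [uIcc_of_ge h] at hsol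
    have := sol_mul_transpose hskew hsol t₀ ⟨h, le_refl _⟩
    rw [hA0] at this
    rw [← this]
    simp

lemma contDiffOn_entry {n : WithTop ℕ∞} {Φ : ℝ → E3} {s : Set ℝ}
    (h : ContDiffOn ℝ n Φ s) (i j : Fin 3) :
    ContDiffOn ℝ n (fun t => Φ t i j) s :=
  (entryCLM i j).contDiff.comp_contDiffOn h

def sbCLM (i j : Fin 3) : ℝ →L[ℝ] E3 :=
  LinearMap.toContinuousLinearMap
    { toFun := fun x => Matrix.single i j x
      map_add' := fun x y => by
        ext i' j'; simp [Matrix.single]; try (split <;> simp)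
      map_smul' := fun c x => by
        ext i' j'; simp [Matrix.single]; try (split <;> simp) }

@[simp] lemma sbCLM_apply (i j : Fin 3) (x : ℝ) :
    sbCLM i j x = Matrix.single i j x := rfl

lemma contDiffOn_of_entries {n : WithTop ℕ∞} {Φ : ℝ → E3} {s : Set ℝ}
    (h : ∀ i j, ContDiffOn ℝ n (fun t => Φ t i j) s) : ContDiffOn ℝ n Φ s := by
  have hΦ : Φ = fun t => ∑ i : Fin 3, ∑ j : Fin 3, Matrix.single i j (Φ t i j) :=
    funext fun t => Matrix.matrix_eq_sum_single (Φ t)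
  rw [hΦ]
  apply ContDiffOn.sum; intro i _
  apply ContDiffOn.sum; intro j _
  exact (sbCLM i j).contDiff.comp_contDiffOn (h i j)

lemma smooth_bootstrap {J : Set ℝ} (hJ : IsOpen J) {A S : ℝ → E3}
    (hA : ∀ t ∈ J, HasDerivAt A (A t * S t) t)
    (hS : ContDiffOn ℝ (⊤ : ℕ∞) S J) : ContDiffOn ℝ (⊤ : ℕ∞) A J := by
  suffices h : ∀ n : ℕ, ContDiffOn ℝ n A J by
    exact contDiffOn_infty.mpr h
  intro n
  induction n with
  | zero =>
    simp only [Nat.cast_zero, contDiffOn_zero]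
    exact fun t ht => ((hA t ht).continuousAt).continuousWithinAt
  | succ n ih =>
    have : ((n + 1 : ℕ) : WithTop ℕ∞) = (n : WithTop ℕ∞) + 1 := by push_cast; rfl
    rw [this, contDiffOn_succ_iff_deriv_of_isOpen hJ]
    refine ⟨fun t ht => ((hA t ht).differentiableAt).differentiableWithinAt, ?_, ?_⟩
    · intro h; simp at h
    · exact (ih.mul (hS.of_le (by exact_mod_cast le_top))).congr fun t ht => (hA t ht).deriv
lemma smooth_bootstrap' {F : Type*} [NormedAddCommGroup F] [NormedSpace ℝ F]
    {J : Set ℝ} (hJ : IsOpen J) {φ ψ : ℝ → F}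
    (hφ : ∀ t ∈ J, HasDerivAt φ (ψ t) t)
    (hψ : ContDiffOn ℝ (⊤ : ℕ∞) ψ J) : ContDiffOn ℝ (⊤ : ℕ∞) φ J := by
  rw [contDiffOn_infty_iff_deriv_of_isOpen hJ]
  exact ⟨fun t ht => ((hφ t ht).differentiableAt).differentiableWithinAt,
    hψ.congr fun t ht => (hφ t ht).deriv⟩

section Main

open Matrix Set
open scoped ContDiff

theorem explicit_coframing_is_flat'
    (J : Set ℝ) (hJ : IsOpen J) (hJint : J.OrdConnected)
    (g₂ g₃ : ℝ → ℝ)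
    (hg₂ : ContDiffOn ℝ (⊤ : ℕ∞) g₂ J) (hg₃ : ContDiffOn ℝ (⊤ : ℕ∞) g₃ J)
    (U : Set (Fin 3 → ℝ)) (hU : IsOpen U) (hUconn : IsConnected U)
    (hUsc : SimplyConnectedSpace U)
    (hUJ : ∀ u ∈ U, u 0 ∈ J)
    (hf : ∀ u ∈ U, 1 + g₂ (u 0) * u 1 + g₃ (u 0) * u 2 ≠ 0) :
    ∃ (x : (Fin 3 → ℝ) → (Fin 3 → ℝ)) (a : (Fin 3 → ℝ) → Matrix (Fin 3) (Fin 3) ℝ),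
      ContDiffOn ℝ (⊤ : ℕ∞) x U ∧
      (∀ u ∈ U, IsUnit (jacobian x u).det) ∧
      (∀ i k : Fin 3, ContDiffOn ℝ (⊤ : ℕ∞) (fun u => a u i k) U) ∧
      (∀ u ∈ U, a u ∈ SO3) ∧
      (∀ u ∈ U, Wmat a x u =
        Matrix.diagonal ![1 + g₂ (u 0) * u 1 + g₃ (u 0) * u 2, 1, 1]) := by
  classical
  obtain ⟨u₀, hu₀⟩ := hUconn.nonempty
  set t₀ : ℝ := u₀ 0 with ht₀def
  have ht₀J : t₀ ∈ J := hUJ u₀ hu₀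
  -- the skew coefficient matrix
  set S : ℝ → E3 := fun t => !![0, g₂ t, g₃ t; -g₂ t, 0, 0; -g₃ t, 0, 0] with hSdef
  have hskew : ∀ t, (S t)ᵀ = -S t := by
    intro t
    ext i j
    fin_cases i <;> fin_cases j <;>
      simp [hSdef, Matrix.transpose_apply, Matrix.neg_apply, Matrix.vecHead, Matrix.vecTail]
  have hSsm : ContDiffOn ℝ (⊤ : ℕ∞) S J := by
    apply contDiffOn_of_entries
    intro i j
    fin_cases i <;> fin_cases j <;>
      · simp only [hSdef, Matrix.cons_val', Matrix.cons_val_zero, Matrix.cons_val_one,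
          Matrix.head_cons, Matrix.empty_val', Matrix.cons_val_fin_one,
          Matrix.of_apply, Matrix.vecHead, Matrix.vecTail, Function.comp]
        first
          | exact contDiffOn_const
          | exact hg₂ | exact hg₃ | exact hg₂.neg | exact hg₃.neg
  have hScont : ContinuousOn S J := hSsm.continuousOn
  obtain ⟨A, hA0, hAd, horthA⟩ := global_sol hJ hJint ht₀J hScont hskew
  have hAcont : ContinuousOn A J := fun t ht => (hAd t ht).continuousAt.continuousWithinAt
  have hAsm : ContDiffOn ℝ (⊤ : ℕ∞) A J := smooth_bootstrap hJ hAd hSsm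
  -- entry derivatives
  have hentry : ∀ (i k : Fin 3), ∀ t ∈ J,
      HasDerivAt (fun τ => A τ i k) ((A t * S t) i k) t := by
    intro i k t ht
    have := (entryCLM i k).hasFDerivAt.comp_hasDerivAt t (hAd t ht)
    exact this
  -- column identities
  have hcol1 : ∀ t, ∀ i, (A t * S t) i 1 = A t i 0 * g₂ t := by
    intro t i
    simp [Matrix.mul_apply, Fin.sum_univ_three, hSdef, Matrix.vecHead, Matrix.vecTail]
  have hcol2 : ∀ t, ∀ i, (A t * S t) i 2 = A t i 0 * g₃ t := by
    intro t i
    simp [Matrix.mul_apply, Fin.sum_univ_three, hSdef, Matrix.vecHead, Matrix.vecTail]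
  -- determinant
  have hdet2 : ∀ t ∈ J, (A t).det * (A t).det = 1 := by
    intro t ht
    have h1 := congrArg Matrix.det (horthA t ht)
    rwa [Matrix.det_mul, Matrix.det_transpose, Matrix.det_one] at h1
  have hdetcont : ContinuousOn (fun t => (A t).det) J :=
    (continuous_id.matrix_det).comp_continuousOn hAcont
  have hdetA : ∀ t ∈ J, (A t).det = 1 := by
    intro t ht
    by_contra hne
    have hm1 : (A t).det = -1 := by
      have := hdet2 t ht
      rcases mul_self_eq_one_iff.mp this with h | h
      · exact absurd h hne
      · exact h
    have hpre : IsPreconnected J := isPreconnected_iff_ordConnected.mpr hJint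
    have hsub : Icc ((fun t => (A t).det) t) ((fun t => (A t).det) t₀) ⊆
        (fun t => (A t).det) '' J :=
      hpre.intermediate_value ht ht₀J hdetcont
    have h0 : (0:ℝ) ∈ Icc ((fun t => (A t).det) t) ((fun t => (A t).det) t₀) := by
      simp only [hm1, hA0, Matrix.det_one]
      exact ⟨by norm_num, by norm_num⟩
    obtain ⟨t₂, ht₂J, ht₂⟩ := hsub h0
    have := hdet2 t₂ ht₂J
    rw [show (A t₂).det = (0:ℝ) from ht₂] at this
    norm_num at this
  -- helper
  have huIccJ : ∀ {m : ℝ}, m ∈ J → uIcc t₀ m ⊆ J := by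
    intro m hm
    rcases le_total t₀ m with h | h
    · rw [uIcc_of_le h]; exact hJint.out ht₀J hm
    · rw [uIcc_of_ge h]; exact hJint.out hm ht₀J
  -- curve
  set c : Fin 3 → ℝ → ℝ := fun i t => ∫ s in t₀..t, A s i 0 with hcdef
  have hcD : ∀ (i : Fin 3), ∀ t ∈ J, HasDerivAt (c i) (A t i 0) t := by
    intro i t ht
    have hcontE : ContinuousOn (fun s => A s i 0) J :=
      (entryCLM i 0).continuous.comp_continuousOn hAcont
    apply intervalIntegral.integral_hasDerivAt_right
    · exact (hcontE.mono (huIccJ ht)).intervalIntegrable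
    · exact ContinuousOn.stronglyMeasurableAtFilter hJ hcontE t ht
    · exact hcontE.continuousAt (hJ.mem_nhds ht)
  have hcsm : ∀ i, ContDiffOn ℝ (⊤ : ℕ∞) (c i) J :=
    fun i => smooth_bootstrap' hJ (hcD i) (contDiffOn_entry hAsm i 0)
  -- maps
  set x : (Fin 3 → ℝ) → (Fin 3 → ℝ) :=
    fun u i => c i (u 0) + u 1 * A (u 0) i 1 + u 2 * A (u 0) i 2 with hxdef
  set a : (Fin 3 → ℝ) → E3 := fun u => A (u 0) with hadef
  set π : Fin 3 → ((Fin 3 → ℝ) →L[ℝ] ℝ) := fun k => ContinuousLinearMap.proj k with hπdef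
  have hprojD : ∀ (k : Fin 3) (u : Fin 3 → ℝ),
      HasFDerivAt (fun v : Fin 3 → ℝ => v k) (π k) u :=
    fun k u => (ContinuousLinearMap.proj k : (Fin 3 → ℝ) →L[ℝ] ℝ).hasFDerivAt
  have hmapsTo : MapsTo (fun u : Fin 3 → ℝ => u 0) U J := fun u hu => hUJ u hu
  have hprojsm : ∀ k : Fin 3, ContDiff ℝ (⊤ : ℕ∞) (fun u : Fin 3 → ℝ => u k) :=
    fun k => (ContinuousLinearMap.proj k : (Fin 3 → ℝ) →L[ℝ] ℝ).contDiff
  -- component derivatives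
  have hxD : ∀ u ∈ U, ∀ i : Fin 3, HasFDerivAt (fun v => x v i)
      (A (u 0) i 0 • π 0 +
        (u 1 • (((A (u 0) * S (u 0)) i 1) • π 0) + A (u 0) i 1 • π 1) +
        (u 2 • (((A (u 0) * S (u 0)) i 2) • π 0) + A (u 0) i 2 • π 2)) u := by
    intro u hu i
    have ht : u 0 ∈ J := hUJ u hu
    have h0 : HasFDerivAt (fun v : Fin 3 → ℝ => c i (v 0)) (A (u 0) i 0 • π 0) u :=
      HasDerivAt.comp_hasFDerivAt (h₂ := c i) u (hcD i (u 0) ht) (hprojD 0 u)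
    have e1 : HasFDerivAt (fun v : Fin 3 → ℝ => A (v 0) i 1)
        (((A (u 0) * S (u 0)) i 1) • π 0) u :=
      HasDerivAt.comp_hasFDerivAt (h₂ := fun τ => A τ i 1) u (hentry i 1 (u 0) ht) (hprojD 0 u)
    have e2 : HasFDerivAt (fun v : Fin 3 → ℝ => A (v 0) i 2)
        (((A (u 0) * S (u 0)) i 2) • π 0) u :=
      HasDerivAt.comp_hasFDerivAt (h₂ := fun τ => A τ i 2) u (hentry i 2 (u 0) ht) (hprojD 0 u)
    have h1 := (hprojD 1 u).mul e1
    have h2 := (hprojD 2 u).mul e2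
    exact (h0.add h1).add h2
  -- the jacobian
  have hjac : ∀ u ∈ U, jacobian x u =
      A (u 0) * Matrix.diagonal ![1 + g₂ (u 0) * u 1 + g₃ (u 0) * u 2, 1, 1] := by
    intro u hu
    have hdiff : ∀ i : Fin 3, DifferentiableAt ℝ (fun v => x v i) u :=
      fun i => (hxD u hu i).differentiableAt
    ext i j
    have hpd : pd j x u i = fderiv ℝ x u (Pi.single j 1) i := rfl
    have hfp : fderiv ℝ x u = ContinuousLinearMap.pi
        (fun i => fderiv ℝ (fun v => x v i) u) := fderiv_pi hdiff
    have hev : pd j x u i = fderiv ℝ (fun v => x v i) u (Pi.single j 1) := by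
      rw [hpd, hfp, ContinuousLinearMap.pi_apply]
    rw [jacobian, Matrix.of_apply, hev, (hxD u hu i).fderiv, Matrix.mul_diagonal]
    have hπj : ∀ k : Fin 3, π k (Pi.single j 1) = (Pi.single j 1 : Fin 3 → ℝ) k := by
      intro k
      simp only [hπdef]
      exact ContinuousLinearMap.proj_apply k _
    fin_cases j <;>
      simp only [ContinuousLinearMap.add_apply, ContinuousLinearMap.smul_apply, hπj,
        Pi.single_apply, smul_eq_mul, hcol1, hcol2] <;>
      · norm_num [Fin.ext_iff]
        try ring
        try rfl
  -- finish
  refine ⟨x, a, ?_, ?_, ?_, ?_, ?_⟩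
  · -- smoothness of x
    rw [contDiffOn_pi]
    intro i
    refine ContDiffOn.add (ContDiffOn.add ?_ ?_) ?_
    · exact (hcsm i).comp (hprojsm 0).contDiffOn hmapsTo
    · exact ((hprojsm 1).contDiffOn).mul
        ((contDiffOn_entry hAsm i 1).comp (hprojsm 0).contDiffOn hmapsTo)
    · exact ((hprojsm 2).contDiffOn).mul
        ((contDiffOn_entry hAsm i 2).comp (hprojsm 0).contDiffOn hmapsTo)
  · -- invertibility of the jacobian
    intro u hu
    rw [hjac u hu, Matrix.det_mul, Matrix.det_diagonal, hdetA _ (hUJ u hu)]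
    refine isUnit_iff_ne_zero.mpr ?_
    simp only [Fin.prod_univ_three]
    have := hf u hu
    simp only [Matrix.cons_val_zero, Matrix.cons_val_one, Matrix.head_cons]
    simpa using this
  · -- smoothness of a
    intro i k
    exact (contDiffOn_entry hAsm i k).comp (hprojsm 0).contDiffOn hmapsTo
  · -- SO(3)
    intro u hu
    exact ⟨mul_eq_one_comm.mp (horthA _ (hUJ u hu)), hdetA _ (hUJ u hu)⟩
  · -- Wmat
    intro u hu
    have hunit : IsUnit (A (u 0)).det := by
      rw [hdetA _ (hUJ u hu)]; exact isUnit_one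
    rw [Wmat, hjac u hu, hadef, ← Matrix.mul_assoc,
      Matrix.nonsing_inv_mul _ hunit, Matrix.one_mul]

end Main

end

end AuxiliaryODE

/-- the coframing `ω = ((1 + g₂(u¹)u² + g₃(u¹)u³) du¹, du², du³)` has
flat associated metric, i.e., it can be written as `ω = a⁻¹ dx`
(the converse claim at the end of Example 4.1 of the paper). -/
theorem explicit_coframing_is_flat
    (J : Set ℝ) (hJ : IsOpen J) (hJint : J.OrdConnected)
    (g₂ g₃ : ℝ → ℝ)
    (hg₂ : ContDiffOn ℝ (⊤ : ℕ∞) g₂ J) (hg₃ : ContDiffOn ℝ (⊤ : ℕ∞) g₃ J)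
    (U : Set (Fin 3 → ℝ)) (hU : IsOpen U) (hUconn : IsConnected U)
    (hUsc : SimplyConnectedSpace U)
    (hUJ : ∀ u ∈ U, u 0 ∈ J)
    (hf : ∀ u ∈ U, 1 + g₂ (u 0) * u 1 + g₃ (u 0) * u 2 ≠ 0) :
    ∃ (x : (Fin 3 → ℝ) → (Fin 3 → ℝ)) (a : (Fin 3 → ℝ) → Matrix (Fin 3) (Fin 3) ℝ),
      ContDiffOn ℝ (⊤ : ℕ∞) x U ∧
      (∀ u ∈ U, IsUnit (jacobian x u).det) ∧
      (∀ i k : Fin 3, ContDiffOn ℝ (⊤ : ℕ∞) (fun u => a u i k) U) ∧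
      (∀ u ∈ U, a u ∈ SO3) ∧
      (∀ u ∈ U, Wmat a x u =
        Matrix.diagonal ![1 + g₂ (u 0) * u 1 + g₃ (u 0) * u 2, 1, 1]) := by
  exact explicit_coframing_is_flat' J hJ hJint g₂ g₃ hg₂ hg₃ U hU hUconn hUsc hUJ hf
end

section
/- Define ρ(u,v) = u² + v² and z(u,v) = (1, ρ(u,v), ρ(u,v)²) ∈ ℝ³. Let U ⊆ ℝ² be an open neighborhood of (0,0), let ũ, ṽ : U → ℝ be smooth functions with ũ(0,0) = 0 whose Jacobian determinant ∂₁ũ·∂₂ṽ − ∂₂ũ·∂₁ṽ is nonvanishing on U (so that (ũ, ṽ) is a (0,0)-centered local coordinate system), and let g : ℝ → ℝ³ be a smooth map satisfying ⟨g(ũ(p)), z(p)⟩ = 0 for all p ∈ U. Then g(0) = 0. In particular, there is no (0,0)-centered local coordinate system (ũ, ṽ) near (0,0) and nonvanishing smooth vector-valued function g(ũ) with ᵗg(ũ) z(ũ, ṽ) = 0. -/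
open Matrix

/-- Example 4.10 of the paper. For `ρ(u,v) = u² + v²` and
`z = (1, ρ, ρ²)`, there is no centered local coordinate system `(ũ, ṽ)` near the
origin and function `g(ũ)` with `⟨g(ũ), z⟩ = 0` unless `g(0) = 0`. -/
theorem critical_point_obstruction
    (U : Set (Fin 2 → ℝ)) (hU : IsOpen U) (h0 : (0 : Fin 2 → ℝ) ∈ U)
    (ut vt : (Fin 2 → ℝ) → ℝ)
    (hut : ContDiffOn ℝ (⊤ : ℕ∞) ut U) (hvt : ContDiffOn ℝ (⊤ : ℕ∞) vt U)
    (hu0 : ut 0 = 0)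
    (hjac : ∀ p ∈ U, pd 0 ut p * pd 1 vt p - pd 1 ut p * pd 0 vt p ≠ 0)
    (g : ℝ → Fin 3 → ℝ) (hg : ContDiff ℝ (⊤ : ℕ∞) g)
    (horth : ∀ p ∈ U,
      g (ut p) ⬝ᵥ
        ![1, (p 0) ^ 2 + (p 1) ^ 2, ((p 0) ^ 2 + (p 1) ^ 2) ^ 2] = 0) :
    g 0 = 0 := by
  classical
  -- derivatives of ut, vt at 0
  have hut0 : ContDiffAt ℝ (⊤ : ℕ∞) ut 0 := hut.contDiffAt (hU.mem_nhds h0)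
  have hvt0 : ContDiffAt ℝ (⊤ : ℕ∞) vt 0 := hvt.contDiffAt (hU.mem_nhds h0)
  have hdu : HasStrictFDerivAt ut (fderiv ℝ ut 0) 0 := hut0.hasStrictFDerivAt (by simp)
  have hdv : HasStrictFDerivAt vt (fderiv ℝ vt 0) 0 := hvt0.hasStrictFDerivAt (by simp)
  set φ : Fin 2 → ((Fin 2 → ℝ) → ℝ) := ![ut, vt] with hφ
  set φ' : Fin 2 → ((Fin 2 → ℝ) →L[ℝ] ℝ) := ![fderiv ℝ ut 0, fderiv ℝ vt 0] with hφ'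
  set f : (Fin 2 → ℝ) → (Fin 2 → ℝ) := fun p i => φ i p with hf
  set L : (Fin 2 → ℝ) →L[ℝ] (Fin 2 → ℝ) := ContinuousLinearMap.pi φ' with hL
  have hdf : HasStrictFDerivAt f L 0 := by
    apply hasStrictFDerivAt_pi.2
    intro i
    fin_cases i
    · simpa [hφ, hφ'] using hdu
    · simpa [hφ, hφ'] using hdv
  have hdet : LinearMap.det (L : (Fin 2 → ℝ) →ₗ[ℝ] (Fin 2 → ℝ)) ≠ 0 := by
    rw [← LinearMap.det_toMatrix']
    rw [Matrix.det_fin_two]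
    have e1 : ∀ (j : Fin 2), (fun j' : Fin 2 => if j' = j then (1:ℝ) else 0) = Pi.single j 1 := by
      intro j; funext j'; simp [Pi.single_apply]
    simp only [LinearMap.toMatrix'_apply, ContinuousLinearMap.coe_coe,
      ContinuousLinearMap.pi_apply, e1]
    have := hjac 0 h0
    simpa [hφ', pd, hL] using this
  -- upgrade L to a continuous linear equivalence
  set E : (Fin 2 → ℝ) ≃L[ℝ] (Fin 2 → ℝ) :=
    (LinearMap.equivOfDetNeZero (L : (Fin 2 → ℝ) →ₗ[ℝ] (Fin 2 → ℝ)) hdet).toContinuousLinearEquiv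
    with hE
  have hEL : (E : (Fin 2 → ℝ) →L[ℝ] (Fin 2 → ℝ)) = L := by
    ext x i
    show E x i = L x i
    have : E x = L x := by
      simp [hE, LinearMap.equivOfDetNeZero]
    rw [this]
  have hdf' : HasStrictFDerivAt f (E : (Fin 2 → ℝ) →L[ℝ] (Fin 2 → ℝ)) 0 := by
    rw [hEL]; exact hdf
  set e : OpenPartialHomeomorph (Fin 2 → ℝ) (Fin 2 → ℝ) := HasStrictFDerivAt.toOpenPartialHomeomorph f hdf' with he
  have hecoe : (e : (Fin 2 → ℝ) → (Fin 2 → ℝ)) = f := HasStrictFDerivAt.toOpenPartialHomeomorph_coe hdf'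
  have h0src : (0 : Fin 2 → ℝ) ∈ e.source := HasStrictFDerivAt.mem_toOpenPartialHomeomorph_source hdf'
  have hftgt : f 0 ∈ e.target := HasStrictFDerivAt.image_mem_toOpenPartialHomeomorph_target hdf'
  -- the curve q t in the target, and its preimage ψ on the level set ut = 0
  set q : ℝ → (Fin 2 → ℝ) := fun t => ![(0:ℝ), vt 0 + t] with hq
  have hqc : Continuous q := by
    apply continuous_pi
    intro i
    fin_cases i
    · show Continuous fun _ : ℝ => (0:ℝ)
      exact continuous_const
    · show Continuous fun t : ℝ => vt 0 + t
      exact (continuous_const.add continuous_id)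
  have hq0 : q 0 = f 0 := by
    funext i
    fin_cases i <;> simp [hq, hf, hφ, hu0]
  set ψ : ℝ → (Fin 2 → ℝ) := fun t => e.symm (q t) with hψ
  have hψ0 : ψ 0 = 0 := by
    have : e.symm (f 0) = 0 := by
      have : f 0 = e 0 := by rw [hecoe]
      rw [this]
      exact e.left_inv h0src
    simp [hψ, hq0, this]
  -- a good neighborhood of 0 in ℝ
  have hψct : ContinuousAt ψ 0 := by
    have h1 : ContinuousAt e.symm (q 0) := by
      rw [hq0]; exact e.continuousAt_symm hftgt
    exact h1.comp hqc.continuousAt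
  have hWnhds : {t : ℝ | q t ∈ e.target ∧ ψ t ∈ U} ∈ nhds (0:ℝ) := by
    apply Filter.inter_mem
    · exact hqc.continuousAt.preimage_mem_nhds (by rw [hq0]; exact e.open_target.mem_nhds hftgt)
    · exact hψct.preimage_mem_nhds (by rw [hψ0]; exact hU.mem_nhds h0)
  obtain ⟨ε, hε, hball⟩ := Metric.mem_nhds_iff.1 hWnhds
  -- facts on the ball
  have hkey : ∀ t : ℝ, t ∈ Metric.ball (0:ℝ) ε → f (ψ t) = q t ∧ ψ t ∈ U := by
    intro t ht
    obtain ⟨h1, h2⟩ := hball ht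
    refine ⟨?_, h2⟩
    have := e.right_inv h1
    rw [hecoe] at this
    exact this
  have hut_zero : ∀ t : ℝ, t ∈ Metric.ball (0:ℝ) ε → ut (ψ t) = 0 := by
    intro t ht
    have h1 := (hkey t ht).1
    have : f (ψ t) 0 = q t 0 := by rw [h1]
    simpa [hf, hφ, hq] using this
  have hvt_val : ∀ t : ℝ, t ∈ Metric.ball (0:ℝ) ε → vt (ψ t) = vt 0 + t := by
    intro t ht
    have h1 := (hkey t ht).1
    have : f (ψ t) 1 = q t 1 := by rw [h1]
    simpa [hf, hφ, hq] using this
  -- continuity of s on the ball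
  set ρ : ℝ → ℝ := fun t => (ψ t 0)^2 + (ψ t 1)^2 with hρ
  have hψcont : ContinuousOn ψ (Metric.ball (0:ℝ) ε) := by
    apply e.continuousOn_symm.comp hqc.continuousOn
    intro t ht
    exact (hball ht).1
  have hρcont : ContinuousOn ρ (Metric.ball (0:ℝ) ε) := by
    apply ContinuousOn.add
    · exact (((continuous_apply (0 : Fin 2)).comp_continuousOn hψcont).pow 2)
    · exact (((continuous_apply (1 : Fin 2)).comp_continuousOn hψcont).pow 2)
  have hψU : ∀ t : ℝ, t ∈ Metric.ball (0:ℝ) ε → ψ t ∈ U := fun t ht => (hkey t ht).2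
  clear_value E L e f φ φ' q ψ
  clear hdf hdf' hdet hEL hdu hdv hWnhds hψct hq0 hqc hecoe h0src hftgt hut0 hvt0 hut hvt hjac hg hφ hφ' hf hL hE he hq hψ hkey hball
  set ε' : ℝ := ε/2 with hε'
  have hsub : Set.Icc (0:ℝ) ε' ⊆ Metric.ball (0:ℝ) ε := by
    intro t ht
    simp only [Metric.mem_ball, Real.dist_eq, sub_zero]
    rw [abs_of_nonneg ht.1]
    linarith [ht.2]
  have hε'pos : 0 < ε' := by positivity
  have hε'ball : ε' ∈ Metric.ball (0:ℝ) ε := hsub ⟨le_of_lt hε'pos, le_refl _⟩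
  clear_value ρ ε'
  -- ρ ε' > 0
  have hψne : ψ ε' ≠ 0 := by
    intro hcontra
    have := hvt_val ε' hε'ball
    rw [hcontra] at this
    linarith
  have hρ1pos : 0 < ρ ε' := by
    simp only [hρ]
    rcases Function.ne_iff.1 hψne with ⟨i, hi⟩
    simp only [Pi.zero_apply] at hi
    fin_cases i
    · have h1 : 0 < (ψ ε' 0)^2 := by positivity
      nlinarith [sq_nonneg (ψ ε' 1)]
    · have h1 : 0 < (ψ ε' 1)^2 := by positivity
      nlinarith [sq_nonneg (ψ ε' 0)]
  -- IVT to find a second positive value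
  have hρ0 : ρ 0 = 0 := by simp [hρ, hψ0]
  have hIVT := intermediate_value_Icc (le_of_lt hε'pos) (hρcont.mono hsub)
  have hmem : ρ ε' / 2 ∈ Set.Icc (ρ 0) (ρ ε') := by
    constructor
    · rw [hρ0]; positivity
    · linarith
  obtain ⟨t₂, ht₂mem, ht₂val⟩ := hIVT hmem
  -- the three orthogonality equations
  have eqn : ∀ t : ℝ, t ∈ Metric.ball (0:ℝ) ε →
      g 0 0 + g 0 1 * ρ t + g 0 2 * (ρ t)^2 = 0 := by
    intro t ht
    have h1 := horth (ψ t) (hψU t ht)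
    rw [hut_zero t ht] at h1
    simpa [dotProduct, Fin.sum_univ_three, hρ, mul_comm, Matrix.vecHead, Matrix.vecTail] using h1
  have eq0 : g 0 0 = 0 := by
    have h1 := horth 0 h0
    rw [hu0] at h1
    simpa [dotProduct, Fin.sum_univ_three, Matrix.vecHead] using h1
  have eq1 := eqn ε' hε'ball
  have eq2 := eqn t₂ (hsub ht₂mem)
  rw [ht₂val] at eq2
  have hbρ : g 0 2 * (ρ ε')^2 = 0 := by linarith
  have hg2 : g 0 2 = 0 := by
    rcases mul_eq_zero.1 hbρ with h | h
    · exact h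
    · exact absurd h (pow_ne_zero 2 (ne_of_gt hρ1pos))
  have hg1 : g 0 1 = 0 := by
    have haρ : g 0 1 * ρ ε' = 0 := by
      rw [hg2] at eq1; linarith
    rcases mul_eq_zero.1 haρ with h | h
    · exact h
    · exact absurd h (ne_of_gt hρ1pos)
  funext i
  fin_cases i <;> simp [eq0, hg1, hg2]
end
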